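/- arXiv:1306.3334 — 6 statements merged into one kernel-verified Lean document; each statement's English description precedes it below -/
import Mathlib

section
/- For every real a > 1/2 there exists a constant C₀ = C₀(a) with the following property: if α : ℕ → ℕ → ℝ is a symmetric nonnegative coagulation kernel satisfying α(m,n) ≥ (mn)^a for all m,n ≥ 1, and f is a solution of the Smoluchowski coagulation equation for α whose mass M(t) = ∑_{n≥1} n·f_n(t) is finite for every t ≥ 0 and nonincreasing in t, then ∫₀^∞ M(t)² dt ≤ C₀·M(0). In particular, if M(0) > 0 then M(t) < M(0) for every t > C₀/M(0), i.e. gelation occurs before time C₀/M(0). -/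
/-- The mass of the density profile `f` at time `t`: `∑_{n ≥ 1} n · f_n(t)`. -/
noncomputable def smolMass (f : ℕ → ℝ → ℝ) (t : ℝ) : ℝ :=
  ∑' n : ℕ, ((n : ℝ) + 1) * f (n + 1) t

/-- `f` is a solution of the discrete homogeneous Smoluchowski coagulation equation
with kernel `α` (only indices `n ≥ 1` matter): the densities are nonnegative, the
loss-term series and the mass series converge, and each `f_n` is differentiable on
`[0,∞)` with the prescribed derivative. -/
structure IsSmoluchowskiSolution (α : ℕ → ℕ → ℝ) (f : ℕ → ℝ → ℝ) : Prop where
  nonneg : ∀ n : ℕ, 1 ≤ n → ∀ t : ℝ, 0 ≤ t → 0 ≤ f n t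
  loss_summable : ∀ n : ℕ, 1 ≤ n → ∀ t : ℝ, 0 ≤ t →
    Summable (fun m : ℕ => α n (m + 1) * f n t * f (m + 1) t)
  mass_summable : ∀ t : ℝ, 0 ≤ t →
    Summable (fun n : ℕ => ((n : ℝ) + 1) * f (n + 1) t)
  hasDeriv : ∀ n : ℕ, 1 ≤ n → ∀ t : ℝ, 0 ≤ t →
    HasDerivWithinAt (fun u => f n u)
      ((1 / 2) * ∑ m ∈ Finset.Ico 1 n, α m (n - m) * f m t * f (n - m) t
        - ∑' m : ℕ, α n (m + 1) * f n t * f (m + 1) t)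
      (Set.Ici (0 : ℝ)) t

set_option maxHeartbeats 1000000
open scoped ENNReal NNReal

open Finset

lemma gain_identity (N : ℕ) (F : ℕ → ℕ → ℝ) (hF : ∀ i j, 1 ≤ i → 1 ≤ j → F i j = F j i) :
    ∑ n ∈ Finset.Icc 1 N, (n : ℝ) * ((1 / 2) * ∑ m ∈ Finset.Ico 1 n, F m (n - m))
      = ∑ p ∈ (Finset.Icc 1 N).sigma (fun n => Finset.Icc 1 (N - n)), (p.1 : ℝ) * F p.1 p.2 := by
  have h1 : ∑ n ∈ Finset.Icc 1 N, (n : ℝ) * ((1 / 2) * ∑ m ∈ Finset.Ico 1 n, F m (n - m))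
      = (1 / 2) * ∑ p ∈ (Finset.Icc 1 N).sigma (fun n => Finset.Ico 1 n),
          (p.1 : ℝ) * F p.2 (p.1 - p.2) := by
    rw [Finset.sum_sigma, Finset.mul_sum]
    refine Finset.sum_congr rfl fun n _ => ?_
    simp only [Finset.mul_sum]
    exact Finset.sum_congr rfl fun m _ => by ring
  have h2 : ∑ p ∈ (Finset.Icc 1 N).sigma (fun n => Finset.Ico 1 n), (p.1 : ℝ) * F p.2 (p.1 - p.2)
      = ∑ p ∈ (Finset.Icc 1 N).sigma (fun n => Finset.Icc 1 (N - n)),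
          ((p.1 + p.2 : ℕ) : ℝ) * F p.1 p.2 := by
    refine Finset.sum_nbij' (fun p => ⟨p.2, p.1 - p.2⟩) (fun p => ⟨p.1 + p.2, p.1⟩) ?_ ?_ ?_ ?_ ?_
    · intro p hp
      simp only [Finset.mem_sigma, Finset.mem_Icc, Finset.mem_Ico] at hp ⊢
      omega
    · intro p hp
      simp only [Finset.mem_sigma, Finset.mem_Icc, Finset.mem_Ico] at hp ⊢
      omega
    · intro p hp
      simp only [Finset.mem_sigma, Finset.mem_Icc, Finset.mem_Ico] at hp
      ext <;> simp <;> omega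
    · intro p hp
      simp only [Finset.mem_sigma, Finset.mem_Icc, Finset.mem_Ico] at hp
      ext <;> simp <;> omega
    · intro p hp
      simp only [Finset.mem_sigma, Finset.mem_Icc, Finset.mem_Ico] at hp
      have : p.2 + (p.1 - p.2) = p.1 := by omega
      rw [this]
  have h3 : ∑ p ∈ (Finset.Icc 1 N).sigma (fun n => Finset.Icc 1 (N - n)),
        ((p.1 + p.2 : ℕ) : ℝ) * F p.1 p.2
      = ∑ p ∈ (Finset.Icc 1 N).sigma (fun n => Finset.Icc 1 (N - n)), (p.1 : ℝ) * F p.1 p.2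
        + ∑ p ∈ (Finset.Icc 1 N).sigma (fun n => Finset.Icc 1 (N - n)), (p.2 : ℝ) * F p.1 p.2 := by
    rw [← Finset.sum_add_distrib]
    refine Finset.sum_congr rfl fun p _ => ?_
    push_cast
    ring
  have h4 : ∑ p ∈ (Finset.Icc 1 N).sigma (fun n => Finset.Icc 1 (N - n)), (p.2 : ℝ) * F p.1 p.2
      = ∑ p ∈ (Finset.Icc 1 N).sigma (fun n => Finset.Icc 1 (N - n)), (p.1 : ℝ) * F p.1 p.2 := by
    refine Finset.sum_nbij' (fun p => ⟨p.2, p.1⟩) (fun p => ⟨p.2, p.1⟩) ?_ ?_ ?_ ?_ ?_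
    · intro p hp
      simp only [Finset.mem_sigma, Finset.mem_Icc] at hp ⊢
      omega
    · intro p hp
      simp only [Finset.mem_sigma, Finset.mem_Icc] at hp ⊢
      omega
    · intro p _; rfl
    · intro p _; rfl
    · intro p hp
      simp only [Finset.mem_sigma, Finset.mem_Icc] at hp
      rw [hF p.1 p.2 hp.1.1 hp.2.1]
  rw [h1, h2, h3, h4]
  ring

open Finset

lemma finsum_le_tsum_shift (h : ℕ → ℝ) (hnn : ∀ m : ℕ, 0 ≤ h (m + 1))
    (hsum : Summable fun m : ℕ => h (m + 1)) (J : Finset ℕ) (hJ : ∀ j ∈ J, 1 ≤ j) :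
    ∑ j ∈ J, h j ≤ ∑' m : ℕ, h (m + 1) := by
  classical
  have key : ∑ m ∈ J.image (· - 1), h (m + 1) = ∑ j ∈ J, h j := by
    rw [Finset.sum_image (by intro x hx y hy hxy; have := hJ x hx; have := hJ y hy; simp only at hxy; omega)]
    refine Finset.sum_congr rfl fun j hj => ?_
    have := hJ j hj
    congr 1
    omega
  rw [← key]
  exact Summable.sum_le_tsum _ (fun m _ => hnn m) hsum

variable {α : ℕ → ℕ → ℝ} {f : ℕ → ℝ → ℝ} {a : ℝ}

lemma loss_lb
    (hnn : ∀ m n : ℕ, 1 ≤ m → 1 ≤ n → 0 ≤ α m n)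
    (hlow : ∀ m n : ℕ, 1 ≤ m → 1 ≤ n → ((m : ℝ) * (n : ℝ)) ^ a ≤ α m n)
    (hfnn : ∀ n : ℕ, 1 ≤ n → ∀ t : ℝ, 0 ≤ t → 0 ≤ f n t)
    (hls : ∀ n : ℕ, 1 ≤ n → ∀ t : ℝ, 0 ≤ t →
      Summable (fun m : ℕ => α n (m + 1) * f n t * f (m + 1) t))
    (S : Finset ℕ) (N : ℕ) (hSN : ∀ i ∈ S, 1 ≤ i ∧ i ≤ N)
    (hpair : ∀ i ∈ S, ∀ j ∈ S, N < i + j)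
    (c : ℝ) (hc : 0 ≤ c) (hci : ∀ i ∈ S, c ≤ (i : ℝ))
    (t : ℝ) (ht : 0 ≤ t) :
    (∑ p ∈ (Finset.Icc 1 N).sigma (fun n => Finset.Icc 1 (N - n)),
        (p.1 : ℝ) * (α p.1 p.2 * f p.1 t * f p.2 t))
      + c * (∑ i ∈ S, (i : ℝ) ^ a * f i t) ^ 2
      ≤ ∑ n ∈ Finset.Icc 1 N, (n : ℝ) * ∑' m : ℕ, α n (m + 1) * f n t * f (m + 1) t := by
  classical
  have hS_sub : S ⊆ Finset.Icc 1 N := by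
    intro i hi; rcases hSN i hi with ⟨h1, h2⟩; simp [Finset.mem_Icc]; omega
  -- termwise nonnegativity
  have hterm_nn : ∀ n j : ℕ, 1 ≤ n → 1 ≤ j → 0 ≤ α n j * f n t * f j t := by
    intro n j hn hj
    exact mul_nonneg (mul_nonneg (hnn n j hn hj) (hfnn n hn t ht)) (hfnn j hj t ht)
  -- per-n bound
  have claim : ∀ n ∈ Finset.Icc 1 N,
      (∑ j ∈ Finset.Icc 1 (N - n), α n j * f n t * f j t)
        + (if n ∈ S then ∑ j ∈ S, α n j * f n t * f j t else 0)
      ≤ ∑' m : ℕ, α n (m + 1) * f n t * f (m + 1) t := by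
    intro n hn
    rw [Finset.mem_Icc] at hn
    by_cases hnS : n ∈ S
    · have hdisj : Disjoint (Finset.Icc 1 (N - n)) S := by
        rw [Finset.disjoint_left]
        intro j hj hjS
        rw [Finset.mem_Icc] at hj
        have := hpair n hnS j hjS
        omega
      rw [if_pos hnS, ← Finset.sum_union hdisj]
      refine finsum_le_tsum_shift _ (fun m => hterm_nn n (m + 1) hn.1 (by omega))
        (hls n hn.1 t ht) _ ?_
      intro j hj
      rcases Finset.mem_union.1 hj with hj | hj
      · exact (Finset.mem_Icc.1 hj).1
      · exact (hSN j hj).1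
    · rw [if_neg hnS, add_zero]
      refine finsum_le_tsum_shift _ (fun m => hterm_nn n (m + 1) hn.1 (by omega))
        (hls n hn.1 t ht) _ ?_
      intro j hj
      exact (Finset.mem_Icc.1 hj).1
  -- multiply by n and sum
  have step : ∑ n ∈ Finset.Icc 1 N,
      ((n : ℝ) * ((∑ j ∈ Finset.Icc 1 (N - n), α n j * f n t * f j t)
        + (if n ∈ S then ∑ j ∈ S, α n j * f n t * f j t else 0)))
      ≤ ∑ n ∈ Finset.Icc 1 N, (n : ℝ) * ∑' m : ℕ, α n (m + 1) * f n t * f (m + 1) t := by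
    refine Finset.sum_le_sum fun n hn => ?_
    have hn1 : (0 : ℝ) ≤ (n : ℝ) := Nat.cast_nonneg n
    exact mul_le_mul_of_nonneg_left (claim n hn) hn1
  refine le_trans ?_ step
  -- split LHS sum
  have split : ∑ n ∈ Finset.Icc 1 N,
      ((n : ℝ) * ((∑ j ∈ Finset.Icc 1 (N - n), α n j * f n t * f j t)
        + (if n ∈ S then ∑ j ∈ S, α n j * f n t * f j t else 0)))
      = (∑ p ∈ (Finset.Icc 1 N).sigma (fun n => Finset.Icc 1 (N - n)),
            (p.1 : ℝ) * (α p.1 p.2 * f p.1 t * f p.2 t))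
        + ∑ n ∈ S, (n : ℝ) * ∑ j ∈ S, α n j * f n t * f j t := by
    simp only [mul_add]
    rw [Finset.sum_add_distrib]
    congr 1
    · rw [Finset.sum_sigma]
      exact Finset.sum_congr rfl fun n _ => by rw [Finset.mul_sum]
    · simp only [mul_ite, mul_zero]
      rw [Finset.sum_ite_mem, Finset.inter_eq_right.mpr hS_sub]
  rw [split]
  refine add_le_add_right ?_ _
  -- dissipation bound
  have expand : (∑ i ∈ S, (i : ℝ) ^ a * f i t) ^ 2
      = ∑ n ∈ S, ∑ j ∈ S, ((n : ℝ) ^ a * f n t) * ((j : ℝ) ^ a * f j t) := by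
    rw [sq, Finset.sum_mul_sum]
  rw [expand, Finset.mul_sum]
  refine Finset.sum_le_sum fun n hnS => ?_
  rw [Finset.mul_sum, Finset.mul_sum]
  refine Finset.sum_le_sum fun j hjS => ?_
  rcases hSN n hnS with ⟨hn1, hnN⟩
  rcases hSN j hjS with ⟨hj1, hjN⟩
  have hn0 : (0:ℝ) < (n:ℝ) := by exact_mod_cast hn1
  have hj0 : (0:ℝ) < (j:ℝ) := by exact_mod_cast hj1
  have hfa : (0:ℝ) ≤ f n t := hfnn n hn1 t ht
  have hfb : (0:ℝ) ≤ f j t := hfnn j hj1 t ht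
  have hna : (0:ℝ) ≤ (n:ℝ) ^ a := Real.rpow_nonneg hn0.le a
  have hja : (0:ℝ) ≤ (j:ℝ) ^ a := Real.rpow_nonneg hj0.le a
  have hmul : ((n : ℝ) * (j : ℝ)) ^ a = (n:ℝ)^a * (j:ℝ)^a := Real.mul_rpow hn0.le hj0.le
  have h1 : c * ((n:ℝ)^a * (j:ℝ)^a) ≤ (n:ℝ) * α n j := by
    have := hlow n j hn1 hj1
    rw [hmul] at this
    calc c * ((n:ℝ)^a * (j:ℝ)^a) ≤ (n:ℝ) * ((n:ℝ)^a * (j:ℝ)^a) :=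
          mul_le_mul_of_nonneg_right (hci n hnS) (mul_nonneg hna hja)
      _ ≤ (n:ℝ) * α n j := mul_le_mul_of_nonneg_left this hn0.le
  calc c * ((n : ℝ) ^ a * f n t * ((j : ℝ) ^ a * f j t))
      = (c * ((n:ℝ)^a * (j:ℝ)^a)) * (f n t * f j t) := by ring
    _ ≤ ((n:ℝ) * α n j) * (f n t * f j t) :=
        mul_le_mul_of_nonneg_right h1 (mul_nonneg hfa hfb)
    _ = (n : ℝ) * (α n j * f n t * f j t) := by ring

open Set MeasureTheory

lemma partial_mass_le {α : ℕ → ℕ → ℝ} {f : ℕ → ℝ → ℝ} (hsol : IsSmoluchowskiSolution α f)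
    {t : ℝ} (ht : 0 ≤ t) (N : ℕ) :
    ∑ n ∈ Finset.Icc 1 N, (n : ℝ) * f n t ≤ smolMass f t := by
  have h : ∑ m ∈ Finset.range N, ((m : ℝ) + 1) * f (m + 1) t
      = ∑ n ∈ Finset.Icc 1 N, (n : ℝ) * f n t := by
    refine Finset.sum_nbij' (fun m => m + 1) (fun n => n - 1) ?_ ?_ ?_ ?_ ?_
    · intro m hm; simp only [Finset.mem_range] at hm; simp [Finset.mem_Icc]; omega
    · intro n hn; simp only [Finset.mem_Icc] at hn; simp [Finset.mem_range]; omega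
    · intro m _; simp
    · intro n hn; simp only [Finset.mem_Icc] at hn; omega
    · intro m _; push_cast; ring
  rw [← h]
  exact Summable.sum_le_tsum _ (fun m _ => mul_nonneg (by positivity)
    (hsol.nonneg (m + 1) (Nat.succ_le_succ (Nat.zero_le m)) t ht)) (hsol.mass_summable t ht)

lemma mass_nonneg {α : ℕ → ℕ → ℝ} {f : ℕ → ℝ → ℝ} (hsol : IsSmoluchowskiSolution α f)
    {t : ℝ} (ht : 0 ≤ t) : 0 ≤ smolMass f t :=
  tsum_nonneg fun n => mul_nonneg (by positivity)
    (hsol.nonneg (n + 1) (Nat.succ_le_succ (Nat.zero_le n)) t ht)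

lemma contOn {α : ℕ → ℕ → ℝ} {f : ℕ → ℝ → ℝ} (hsol : IsSmoluchowskiSolution α f)
    {n : ℕ} (hn : 1 ≤ n) : ContinuousOn (f n) (Set.Ici 0) := fun t ht =>
  (hsol.hasDeriv n hn t ht).continuousWithinAt

lemma key_integral_bound {α : ℕ → ℕ → ℝ} {f : ℕ → ℝ → ℝ} {a : ℝ}
    (hsym : ∀ m n : ℕ, 1 ≤ m → 1 ≤ n → α m n = α n m)
    (hnn : ∀ m n : ℕ, 1 ≤ m → 1 ≤ n → 0 ≤ α m n)
    (hlow : ∀ m n : ℕ, 1 ≤ m → 1 ≤ n → ((m : ℝ) * (n : ℝ)) ^ a ≤ α m n)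
    (hsol : IsSmoluchowskiSolution α f)
    (S : Finset ℕ) (N : ℕ) (hSN : ∀ i ∈ S, 1 ≤ i ∧ i ≤ N)
    (hpair : ∀ i ∈ S, ∀ j ∈ S, N < i + j)
    (c : ℝ) (hc : 0 ≤ c) (hci : ∀ i ∈ S, c ≤ (i : ℝ))
    (T : ℝ) (hT : 0 ≤ T) :
    c * ∫ t in (0:ℝ)..T, (∑ i ∈ S, (i : ℝ) ^ a * f i t) ^ 2 ≤ smolMass f 0 := by
  classical
  set Q : ℝ → ℝ := fun t => ∑ i ∈ S, (i : ℝ) ^ a * f i t with hQdef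
  set g : ℝ → ℝ := fun t => ∑ n ∈ Finset.Icc 1 N, (n : ℝ) * f n t with hgdef
  set G : ℝ → ℝ := fun t => ∑ n ∈ Finset.Icc 1 N, (n : ℝ) *
      ((1 / 2) * ∑ m ∈ Finset.Ico 1 n, α m (n - m) * f m t * f (n - m) t
        - ∑' m : ℕ, α n (m + 1) * f n t * f (m + 1) t) with hGdef
  have hQcont : ContinuousOn Q (Set.Ici 0) := by
    apply continuousOn_finset_sum
    intro i hi
    exact continuousOn_const.mul (contOn hsol (hSN i hi).1)
  have hQ2cont : ContinuousOn (fun t => Q t ^ 2) (Set.Ici 0) := hQcont.pow 2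
  have hgcont : ContinuousOn g (Set.Ici 0) := by
    apply continuousOn_finset_sum
    intro n hn
    exact continuousOn_const.mul (contOn hsol (Finset.mem_Icc.1 hn).1)
  have hgderiv : ∀ t ∈ Set.Ici (0:ℝ), HasDerivWithinAt g (G t) (Set.Ici 0) t := by
    intro t ht
    exact HasDerivWithinAt.fun_sum fun n hn =>
      (hsol.hasDeriv n (Finset.mem_Icc.1 hn).1 t ht).const_mul ((n : ℝ))
  have hGle : ∀ t ∈ Set.Ici (0:ℝ), G t ≤ -(c * Q t ^ 2) := by
    intro t ht
    have hgain := gain_identity N (fun i j => α i j * f i t * f j t)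
      (fun i j hi hj => by rw [hsym i j hi hj]; ring)
    have hloss := loss_lb hnn hlow hsol.nonneg hsol.loss_summable S N hSN hpair c hc hci t ht
    have hsplit : G t
        = (∑ n ∈ Finset.Icc 1 N, (n : ℝ) *
            ((1 / 2) * ∑ m ∈ Finset.Ico 1 n, α m (n - m) * f m t * f (n - m) t))
          - ∑ n ∈ Finset.Icc 1 N, (n : ℝ) * ∑' m : ℕ, α n (m + 1) * f n t * f (m + 1) t := by
      rw [hGdef, ← Finset.sum_sub_distrib]
      exact Finset.sum_congr rfl fun n _ => by ring
    rw [hsplit, hgain]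
    linarith [hloss]
  rcases eq_or_lt_of_le hT with hT0 | hT0
  · rw [← hT0, intervalIntegral.integral_same, mul_zero]
    exact mass_nonneg hsol le_rfl
  set w : ℝ → ℝ := fun t => g t + c * ∫ s in (0:ℝ)..t, Q s ^ 2 with hwdef
  have hIccIci : Set.Icc (0:ℝ) T ⊆ Set.Ici 0 := fun x hx => hx.1
  have hint_on : IntegrableOn (fun s => Q s ^ 2) (Set.Icc 0 T) :=
    (hQ2cont.mono hIccIci).integrableOn_Icc
  have hwcont : ContinuousOn w (Set.Icc 0 T) := by
    apply ContinuousOn.add (hgcont.mono hIccIci)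
    apply ContinuousOn.mul continuousOn_const
    have := intervalIntegral.continuousOn_primitive_interval (a := 0) (b := T) (μ := volume)
      (f := fun s => Q s ^ 2) (by rwa [Set.uIcc_of_le hT])
    rwa [Set.uIcc_of_le hT] at this
  have hwderiv : ∀ x ∈ Set.Ioo (0:ℝ) T, HasDerivAt w (G x + c * Q x ^ 2) x := by
    intro x hx
    have hx0 : (0:ℝ) < x := hx.1
    have hnhds : Set.Ici (0:ℝ) ∈ nhds x := Ici_mem_nhds hx0
    have hg' : HasDerivAt g (G x) x := (hgderiv x hx0.le).hasDerivAt hnhds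
    have hint : IntervalIntegrable (fun s => Q s ^ 2) volume 0 x := by
      apply ContinuousOn.intervalIntegrable
      rw [Set.uIcc_of_le hx0.le]
      exact hQ2cont.mono (fun y hy => hy.1)
    have hmeas : StronglyMeasurableAtFilter (fun s => Q s ^ 2) (nhds x) volume :=
      (hQ2cont.mono Set.Ioi_subset_Ici_self).stronglyMeasurableAtFilter isOpen_Ioi x hx0
    have hcontAt : ContinuousAt (fun s => Q s ^ 2) x :=
      (hQ2cont x hx0.le).continuousAt hnhds
    have hI : HasDerivAt (fun u => ∫ s in (0:ℝ)..u, Q s ^ 2) (Q x ^ 2) x :=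
      intervalIntegral.integral_hasDerivAt_right hint hmeas hcontAt
    exact hg'.add (hI.const_mul c)
  have hanti : AntitoneOn w (Set.Icc 0 T) := by
    apply antitoneOn_of_deriv_nonpos (convex_Icc 0 T) hwcont
    · intro x hx
      rw [interior_Icc] at hx
      exact (hwderiv x hx).differentiableAt.differentiableWithinAt
    · intro x hx
      rw [interior_Icc] at hx
      rw [(hwderiv x hx).deriv]
      have := hGle x (le_of_lt hx.1)
      linarith
  have hwT : w T ≤ w 0 := hanti (Set.left_mem_Icc.2 hT) (Set.right_mem_Icc.2 hT) hT
  have hw0 : w 0 = g 0 := by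
    simp [hwdef, intervalIntegral.integral_same]
  have hgT : 0 ≤ g T := Finset.sum_nonneg fun n hn =>
    mul_nonneg (Nat.cast_nonneg n) (hsol.nonneg n (Finset.mem_Icc.1 hn).1 T hT)
  have hg0 : g 0 ≤ smolMass f 0 := partial_mass_le hsol le_rfl N
  have : g T + c * ∫ s in (0:ℝ)..T, Q s ^ 2 ≤ g 0 := by rw [← hw0]; exact hwT
  linarith

open ENNReal in
lemma lintegral_Ioi_le_of_Ioc (g : ℝ → ℝ≥0∞) (C : ℝ≥0∞)
    (hmeas : AEMeasurable g (volume.restrict (Set.Ioi 0)))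
    (h : ∀ n : ℕ, ∫⁻ t in Set.Ioc (0:ℝ) (n:ℝ), g t ≤ C) :
    ∫⁻ t in Set.Ioi (0:ℝ), g t ≤ C := by
  have hind : ∀ n : ℕ, AEMeasurable ((Set.Ioc (0:ℝ) (n:ℝ)).indicator g) volume := by
    intro n
    rw [aemeasurable_indicator_iff measurableSet_Ioc]
    exact hmeas.mono_measure (Measure.restrict_mono Set.Ioc_subset_Ioi_self le_rfl)
  have hmono : ∀ t : ℝ, Monotone fun n : ℕ => (Set.Ioc (0:ℝ) (n:ℝ)).indicator g t := by
    intro t m n hmn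
    apply Set.indicator_le_indicator_of_subset
      (Set.Ioc_subset_Ioc_right (by exact_mod_cast hmn)) (fun x => zero_le)
  have heq : (Set.Ioi (0:ℝ)).indicator g
      = fun t => ⨆ n : ℕ, (Set.Ioc (0:ℝ) (n:ℝ)).indicator g t := by
    funext t
    by_cases ht : t ∈ Set.Ioi (0:ℝ)
    · rw [Set.indicator_of_mem ht]
      refine le_antisymm ?_ (iSup_le fun n => ?_)
      · have htc : t ∈ Set.Ioc (0:ℝ) ((⌈t⌉₊ : ℕ) : ℝ) := ⟨ht, Nat.le_ceil t⟩
        calc g t = (Set.Ioc (0:ℝ) ((⌈t⌉₊ : ℕ):ℝ)).indicator g t :=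
              (Set.indicator_of_mem htc g).symm
          _ ≤ _ := le_iSup (fun n : ℕ => (Set.Ioc (0:ℝ) (n:ℝ)).indicator g t) ⌈t⌉₊
      · classical
        rw [Set.indicator_apply]
        split
        · exact le_rfl
        · exact zero_le
    · rw [Set.indicator_of_notMem ht]
      symm
      rw [ENNReal.iSup_eq_zero]
      intro n
      exact Set.indicator_of_notMem (fun hmem => ht (Set.Ioc_subset_Ioi_self hmem)) g
  calc ∫⁻ t in Set.Ioi (0:ℝ), g t
      = ∫⁻ t, (Set.Ioi (0:ℝ)).indicator g t := (lintegral_indicator measurableSet_Ioi g).symm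
    _ = ∫⁻ t, ⨆ n : ℕ, (Set.Ioc (0:ℝ) (n:ℝ)).indicator g t := by rw [heq]
    _ = ⨆ n : ℕ, ∫⁻ t, (Set.Ioc (0:ℝ) (n:ℝ)).indicator g t :=
        lintegral_iSup' hind (Filter.Eventually.of_forall hmono)
    _ = ⨆ n : ℕ, ∫⁻ t in Set.Ioc (0:ℝ) (n:ℝ), g t := by
        refine iSup_congr fun n => lintegral_indicator measurableSet_Ioc g
    _ ≤ C := iSup_le h

lemma block_lintegral_bound {α : ℕ → ℕ → ℝ} {f : ℕ → ℝ → ℝ} {a : ℝ}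
    (hsym : ∀ m n : ℕ, 1 ≤ m → 1 ≤ n → α m n = α n m)
    (hnn : ∀ m n : ℕ, 1 ≤ m → 1 ≤ n → 0 ≤ α m n)
    (hlow : ∀ m n : ℕ, 1 ≤ m → 1 ≤ n → ((m : ℝ) * (n : ℝ)) ^ a ≤ α m n)
    (hsol : IsSmoluchowskiSolution α f)
    (S : Finset ℕ) (N : ℕ) (hSN : ∀ i ∈ S, 1 ≤ i ∧ i ≤ N)
    (hpair : ∀ i ∈ S, ∀ j ∈ S, N < i + j)
    (c : ℝ) (hc : 0 < c) (hci : ∀ i ∈ S, c ≤ (i : ℝ)) :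
    ∫⁻ t in Set.Ioi (0:ℝ), ENNReal.ofReal ((∑ i ∈ S, (i : ℝ) ^ a * f i t) ^ 2)
      ≤ ENNReal.ofReal (smolMass f 0 / c) := by
  set Q : ℝ → ℝ := fun t => ∑ i ∈ S, (i : ℝ) ^ a * f i t with hQdef
  have hQcont : ContinuousOn Q (Set.Ici 0) := by
    apply continuousOn_finset_sum
    intro i hi
    exact continuousOn_const.mul (contOn hsol (hSN i hi).1)
  have hQ2cont : ContinuousOn (fun t => Q t ^ 2) (Set.Ici 0) := hQcont.pow 2
  apply lintegral_Ioi_le_of_Ioc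
  · exact ENNReal.measurable_ofReal.comp_aemeasurable
      ((hQ2cont.mono Set.Ioi_subset_Ici_self).aemeasurable measurableSet_Ioi)
  · intro n
    have hn0 : (0:ℝ) ≤ (n:ℝ) := Nat.cast_nonneg n
    have hkey := key_integral_bound hsym hnn hlow hsol S N hSN hpair c hc.le hci (n:ℝ) hn0
    have hInt : IntegrableOn (fun t => Q t ^ 2) (Set.Ioc (0:ℝ) (n:ℝ)) :=
      ((hQ2cont.mono (fun x hx => hx.1)).integrableOn_Icc).mono_set Set.Ioc_subset_Icc_self
    have hI : ∫⁻ t in Set.Ioc (0:ℝ) (n:ℝ), ENNReal.ofReal (Q t ^ 2)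
        = ENNReal.ofReal (∫ t in Set.Ioc (0:ℝ) (n:ℝ), Q t ^ 2) :=
      (ofReal_integral_eq_lintegral_ofReal hInt
        (Filter.Eventually.of_forall fun t => sq_nonneg _)).symm
    rw [hI]
    apply ENNReal.ofReal_le_ofReal
    rw [← intervalIntegral.integral_of_le hn0, le_div_iff₀ hc]
    linarith

lemma enn_cs (b x : ℕ → ℝ≥0∞) :
    (∑' q, b q * x q) ^ 2 ≤ 2 * (∑' q, b q) * (∑' q, b q * x q ^ 2) := by
  have hxy : ∀ j k : ℕ, (b j * x j) * (b k * x k) ≤ b j * b k * (x j ^ 2 + x k ^ 2) := by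
    intro j k
    rcases le_total (x j) (x k) with h | h
    · calc (b j * x j) * (b k * x k) ≤ (b j * x k) * (b k * x k) := by
            gcongr
        _ = b j * b k * x k ^ 2 := by ring
        _ ≤ b j * b k * (x j ^ 2 + x k ^ 2) := by
            exact mul_le_mul_right le_add_self _
    · calc (b j * x j) * (b k * x k) ≤ (b j * x j) * (b k * x j) := by
            gcongr
        _ = b j * b k * x j ^ 2 := by ring
        _ ≤ b j * b k * (x j ^ 2 + x k ^ 2) := by
            exact mul_le_mul_right le_self_add _
  calc (∑' q, b q * x q) ^ 2
      = ∑' j, (b j * x j) * ∑' k, (b k * x k) := by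
        rw [sq, ← ENNReal.tsum_mul_right]
    _ = ∑' j, ∑' k, (b j * x j) * (b k * x k) := by
        refine tsum_congr fun j => ?_
        rw [← ENNReal.tsum_mul_left]
    _ ≤ ∑' j, ∑' k, b j * b k * (x j ^ 2 + x k ^ 2) :=
        ENNReal.tsum_le_tsum fun j => ENNReal.tsum_le_tsum fun k => hxy j k
    _ = ∑' j, (∑' k, (b j * b k * x j ^ 2 + b j * b k * x k ^ 2)) := by
        refine tsum_congr fun j => tsum_congr fun k => by ring
    _ = ∑' j, ((∑' k, b j * b k * x j ^ 2) + ∑' k, b j * b k * x k ^ 2) := by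
        refine tsum_congr fun j => ENNReal.tsum_add
    _ = (∑' j, ∑' k, b j * b k * x j ^ 2) + ∑' j, ∑' k, b j * b k * x k ^ 2 :=
        ENNReal.tsum_add
    _ = 2 * (∑' q, b q) * (∑' q, b q * x q ^ 2) := by
        have h1 : ∀ j, ∑' k : ℕ, b j * b k * x j ^ 2 = (b j * x j ^ 2) * ∑' k, b k := by
          intro j
          rw [← ENNReal.tsum_mul_left]
          exact tsum_congr fun k => by ring
        have h2 : ∀ j, ∑' k : ℕ, b j * b k * x k ^ 2 = b j * ∑' k, b k * x k ^ 2 := by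
          intro j
          rw [← ENNReal.tsum_mul_left]
          exact tsum_congr fun k => by ring
        simp only [h1, h2]
        rw [ENNReal.tsum_mul_right, ENNReal.tsum_mul_right]
        ring

lemma enn_cs' (b v : ℕ → ℝ≥0∞) (hb0 : ∀ q, b q ≠ 0) (hbt : ∀ q, b q ≠ ⊤) :
    (∑' q, v q) ^ 2 ≤ 2 * (∑' q, b q) * (∑' q, v q ^ 2 / b q) := by
  have hv : ∀ q, b q * (v q / b q) = v q := fun q => ENNReal.mul_div_cancel (hb0 q) (hbt q)
  have hv2 : ∀ q, b q * (v q / b q) ^ 2 = v q ^ 2 / b q := by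
    intro q
    calc b q * (v q / b q) ^ 2 = (b q * (v q / b q)) * (v q / b q) := by ring
      _ = v q * (v q / b q) := by rw [hv]
      _ = v q * v q / b q := by rw [mul_div_assoc]
      _ = v q ^ 2 / b q := by rw [sq]
  have := enn_cs b fun q => v q / b q
  simp only [hv, hv2] at this
  exact this


section MP
variable {α : ℕ → ℕ → ℝ} {f : ℕ → ℝ → ℝ} {a : ℝ}

/-- weight for block `k`: sizes in `(2^k, 2^(k+1)]`. -/
noncomputable def wgt (a : ℝ) (k : ℕ) : ℝ := (((2:ℝ) ^ (k+1 : ℕ))) ^ (1 - a)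

/-- block sum of `i^a f_i`. -/
noncomputable def Qb (f : ℕ → ℝ → ℝ) (a : ℝ) (k : ℕ) (t : ℝ) : ℝ :=
  ∑ i ∈ Finset.Ioc (2^k : ℕ) (2^(k+1) : ℕ), (i : ℝ) ^ a * f i t

/-- combined sequence controlling the mass. -/
noncomputable def useq (f : ℕ → ℝ → ℝ) (a : ℝ) : ℕ → ℝ → ℝ
  | 0 => fun t => f 1 t
  | (k+1) => fun t => wgt a k * Qb f a k t

lemma wgt_nonneg (a : ℝ) (k : ℕ) : 0 ≤ wgt a k := Real.rpow_nonneg (by positivity) _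

lemma useq_nonneg (hsol : IsSmoluchowskiSolution α f) {t : ℝ} (ht : 0 ≤ t) (q : ℕ) :
    0 ≤ useq f a q t := by
  cases q with
  | zero => exact hsol.nonneg 1 le_rfl t ht
  | succ k =>
      refine mul_nonneg (wgt_nonneg a k) (Finset.sum_nonneg fun i hi => ?_)
      rw [Finset.mem_Ioc] at hi
      have hi1 : 1 ≤ i := by have := Nat.one_le_two_pow (n := k); omega
      exact mul_nonneg (Real.rpow_nonneg (Nat.cast_nonneg i) a) (hsol.nonneg i hi1 t ht)

lemma mass_ptwise (hsol : IsSmoluchowskiSolution α f) (ha2 : a ≤ 1)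
    {t : ℝ} (ht : 0 ≤ t) :
    ENNReal.ofReal (smolMass f t) ≤ ∑' q : ℕ, ENNReal.ofReal (useq f a q t) := by
  classical
  have hnn : ∀ n : ℕ, 0 ≤ ((n : ℝ) + 1) * f (n + 1) t := fun n =>
    mul_nonneg (by positivity) (hsol.nonneg (n+1) (Nat.succ_le_succ (Nat.zero_le n)) t ht)
  have hofsum : ENNReal.ofReal (smolMass f t)
      = ∑' n : ℕ, ENNReal.ofReal (((n : ℝ) + 1) * f (n + 1) t) :=
    ENNReal.ofReal_tsum_of_nonneg hnn (hsol.mass_summable t ht)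
  set ψ : ℕ → ℝ≥0∞ := fun n => ENNReal.ofReal (((n : ℝ) + 1) * f (n + 1) t) with hψ
  set φ : ℕ → ℕ := fun n => if n = 0 then 0 else Nat.log 2 n + 1 with hφ
  have hfiber : ∑' q : ℕ, ∑' n : (φ ⁻¹' {q} : Set ℕ), ψ n = ∑' n, ψ n :=
    ENNReal.tsum_fiberwise ψ φ
  rw [hofsum, ← hfiber]
  refine ENNReal.tsum_le_tsum fun q => ?_
  cases q with
  | zero =>
      have hset : (φ ⁻¹' {0} : Set ℕ) = ({0} : Set ℕ) := by
        ext n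
        by_cases hn : n = 0 <;> simp [hφ, hn]
      rw [hset, tsum_singleton]
      simp only [hψ, useq, Nat.cast_zero, zero_add, one_mul]
      exact le_rfl
  | succ k =>
      have hset : (φ ⁻¹' {k+1} : Set ℕ) = ((Finset.Ico (2^k : ℕ) (2^(k+1) : ℕ) : Finset ℕ) : Set ℕ) := by
        ext n
        simp only [Set.mem_preimage, Set.mem_singleton_iff, Finset.coe_Ico, Set.mem_Ico]
        constructor
        · intro h
          by_cases hn : n = 0
          · simp [hφ, hn] at h
          · simp only [hφ, if_neg hn] at h
            have hk : Nat.log 2 n = k := by omega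
            refine ⟨hk ▸ Nat.pow_log_le_self 2 hn, hk ▸ Nat.lt_pow_succ_log_self (by norm_num) n⟩
        · rintro ⟨h1, h2⟩
          have hn : n ≠ 0 := by have := Nat.one_le_two_pow (n := k); omega
          simp only [hφ, if_neg hn]
          have := Nat.log_eq_of_pow_le_of_lt_pow h1 h2
          omega
      rw [hset, Finset.tsum_subtype']
      -- now a finite sum bound
      have hsum_eq : ∑ n ∈ Finset.Ico (2^k : ℕ) (2^(k+1) : ℕ), ψ n
          = ENNReal.ofReal (∑ n ∈ Finset.Ico (2^k : ℕ) (2^(k+1) : ℕ), ((n : ℝ) + 1) * f (n + 1) t) := by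
        rw [ENNReal.ofReal_sum_of_nonneg (fun n _ => hnn n)]
      rw [hsum_eq]
      apply ENNReal.ofReal_le_ofReal
      -- real inequality
      have step1 : ∀ n ∈ Finset.Ico (2^k : ℕ) (2^(k+1) : ℕ),
          ((n : ℝ) + 1) * f (n + 1) t ≤ wgt a k * (((n+1 : ℕ) : ℝ) ^ a * f (n + 1) t) := by
        intro n hn
        rw [Finset.mem_Ico] at hn
        have hs1 : (1:ℝ) ≤ ((n+1 : ℕ) : ℝ) := by exact_mod_cast Nat.succ_le_succ (Nat.zero_le n)
        have hs0 : (0:ℝ) < ((n+1 : ℕ) : ℝ) := lt_of_lt_of_le one_pos hs1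
        have hsle : ((n+1 : ℕ) : ℝ) ≤ (2:ℝ) ^ (k+1 : ℕ) := by
          have : n + 1 ≤ 2^(k+1) := hn.2
          exact_mod_cast this
        have hfact : ((n+1 : ℕ) : ℝ) = ((n+1 : ℕ) : ℝ) ^ (1 - a) * ((n+1 : ℕ) : ℝ) ^ a := by
          rw [← Real.rpow_add hs0, sub_add_cancel, Real.rpow_one]
        have hb : ((n+1 : ℕ) : ℝ) ^ (1 - a) ≤ wgt a k :=
          Real.rpow_le_rpow hs0.le hsle (by linarith)
        have hfnn : 0 ≤ f (n + 1) t := hsol.nonneg (n+1) (Nat.succ_le_succ (Nat.zero_le n)) t ht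
        calc ((n : ℝ) + 1) * f (n + 1) t = ((n+1 : ℕ) : ℝ) * f (n + 1) t := by push_cast; ring
          _ = (((n+1 : ℕ) : ℝ) ^ (1 - a) * ((n+1 : ℕ) : ℝ) ^ a) * f (n + 1) t := by
              rw [← hfact]
          _ ≤ (wgt a k * ((n+1 : ℕ) : ℝ) ^ a) * f (n + 1) t := by
              apply mul_le_mul_of_nonneg_right _ hfnn
              exact mul_le_mul_of_nonneg_right hb (Real.rpow_nonneg hs0.le a)
          _ = wgt a k * (((n+1 : ℕ) : ℝ) ^ a * f (n + 1) t) := by ring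
      calc ∑ n ∈ Finset.Ico (2^k : ℕ) (2^(k+1) : ℕ), ((n : ℝ) + 1) * f (n + 1) t
          ≤ ∑ n ∈ Finset.Ico (2^k : ℕ) (2^(k+1) : ℕ), wgt a k * (((n+1 : ℕ) : ℝ) ^ a * f (n + 1) t) :=
            Finset.sum_le_sum step1
        _ = wgt a k * ∑ n ∈ Finset.Ico (2^k : ℕ) (2^(k+1) : ℕ), (((n+1 : ℕ) : ℝ) ^ a * f (n + 1) t) := by
            rw [Finset.mul_sum]
        _ = useq f a (k+1) t := by
            simp only [useq, Qb]
            congr 1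
            refine Finset.sum_nbij' (fun n => n + 1) (fun i => i - 1) ?_ ?_ ?_ ?_ ?_
            · intro n hn; simp only [Finset.mem_Ico] at hn; simp only [Finset.mem_Ioc]; omega
            · intro i hi; simp only [Finset.mem_Ioc] at hi; simp only [Finset.mem_Ico]; omega
            · intro n _; simp
            · intro i hi; simp only [Finset.mem_Ioc] at hi;
              have : 1 ≤ i := by have := Nat.one_le_two_pow (n := k); omega
              omega
            · intro n _; rfl
end MP

section Assemble
variable {α : ℕ → ℕ → ℝ} {f : ℕ → ℝ → ℝ} {a : ℝ}

lemma two_rpow_pos (x : ℝ) : (0:ℝ) < (2:ℝ) ^ x := Real.rpow_pos_of_pos two_pos x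

lemma scalar_id (a : ℝ) (k : ℕ) :
    ((((2:ℝ) ^ ((1:ℝ)/2 - a)) ^ (k+1 : ℕ))⁻¹ * (wgt a k)^2 / ((2^k : ℕ):ℝ))
      = 2 * ((2:ℝ) ^ ((1:ℝ)/2 - a)) ^ (k+1 : ℕ) := by
  have h2 : (0:ℝ) ≤ 2 := by norm_num
  have e1 : (((2:ℝ) ^ ((1:ℝ)/2 - a)) ^ (k+1 : ℕ)) = (2:ℝ) ^ (((k:ℝ)+1) * ((1:ℝ)/2 - a)) := by
    rw [← Real.rpow_natCast ((2:ℝ) ^ ((1:ℝ)/2 - a)) (k+1), ← Real.rpow_mul h2]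
    congr 1
    push_cast
    ring
  have e2 : (wgt a k)^2 = (2:ℝ) ^ (((k:ℝ)+1) * (2 * (1 - a))) := by
    unfold wgt
    rw [← Real.rpow_natCast (2:ℝ) (k+1), ← Real.rpow_mul h2,
      ← Real.rpow_natCast ((2:ℝ) ^ (((k+1:ℕ):ℝ) * (1 - a))) 2, ← Real.rpow_mul h2]
    congr 1
    push_cast
    ring
  have e3 : ((2^k : ℕ):ℝ) = (2:ℝ) ^ ((k:ℝ)) := by
    push_cast
    rw [← Real.rpow_natCast (2:ℝ) k]
  rw [e1, e2, e3, ← Real.rpow_neg h2, div_eq_mul_inv, ← Real.rpow_neg h2,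
    ← Real.rpow_add two_pos, ← Real.rpow_add two_pos]
  have e4 : (2:ℝ) * (2:ℝ) ^ (((k:ℝ)+1) * ((1:ℝ)/2 - a))
      = (2:ℝ) ^ (1 + ((k:ℝ)+1) * ((1:ℝ)/2 - a)) := by
    rw [Real.rpow_add two_pos, Real.rpow_one]
  rw [e4]
  congr 1
  ring

lemma Qb_contOn (hsol : IsSmoluchowskiSolution α f) (k : ℕ) :
    ContinuousOn (Qb f a k) (Set.Ici 0) := by
  apply continuousOn_finset_sum
  intro i hi
  rw [Finset.mem_Ioc] at hi
  have hi1 : 1 ≤ i := by have := Nat.one_le_two_pow (n := k); omega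
  exact continuousOn_const.mul (contOn hsol hi1)

lemma useq_contOn (hsol : IsSmoluchowskiSolution α f) (q : ℕ) :
    ContinuousOn (useq f a q) (Set.Ici 0) := by
  cases q with
  | zero => exact contOn hsol le_rfl
  | succ k => exact continuousOn_const.mul (Qb_contOn hsol k)

lemma perq
    (hsym : ∀ m n : ℕ, 1 ≤ m → 1 ≤ n → α m n = α n m)
    (hnn : ∀ m n : ℕ, 1 ≤ m → 1 ≤ n → 0 ≤ α m n)
    (hlow : ∀ m n : ℕ, 1 ≤ m → 1 ≤ n → ((m : ℝ) * (n : ℝ)) ^ a ≤ α m n)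
    (hsol : IsSmoluchowskiSolution α f) (q : ℕ) :
    (ENNReal.ofReal (((2:ℝ) ^ ((1:ℝ)/2 - a)) ^ q))⁻¹
        * ∫⁻ t in Set.Ioi (0:ℝ), (ENNReal.ofReal (useq f a q t))^2
      ≤ ENNReal.ofReal (2 * ((2:ℝ) ^ ((1:ℝ)/2 - a)) ^ q * smolMass f 0) := by
  set ρ : ℝ := (2:ℝ) ^ ((1:ℝ)/2 - a) with hρdef
  have hρ0 : (0:ℝ) < ρ := two_rpow_pos _
  have hM0 : 0 ≤ smolMass f 0 := mass_nonneg hsol le_rfl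
  cases q with
  | zero =>
      simp only [pow_zero, ENNReal.ofReal_one, inv_one, one_mul]
      have hbl := block_lintegral_bound hsym hnn hlow hsol {1} 1
        (by intro i hi; simp at hi; omega)
        (by intro i hi j hj; simp at hi hj; omega)
        1 one_pos (by intro i hi; simp at hi; simp [hi])
      have hQ1 : ∀ t : ℝ, (∑ i ∈ ({1} : Finset ℕ), (i : ℝ) ^ a * f i t) = f 1 t := by
        intro t
        simp [Real.one_rpow]
      have heq : ∫⁻ t in Set.Ioi (0:ℝ), (ENNReal.ofReal (useq f a 0 t))^2
          = ∫⁻ t in Set.Ioi (0:ℝ),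
              ENNReal.ofReal ((∑ i ∈ ({1} : Finset ℕ), (i : ℝ) ^ a * f i t) ^ 2) := by
        refine setLIntegral_congr_fun measurableSet_Ioi ?_
        intro t ht
        beta_reduce
        rw [hQ1 t]
        have h0 : 0 ≤ f 1 t := hsol.nonneg 1 le_rfl t (le_of_lt ht)
        show ENNReal.ofReal (f 1 t) ^ 2 = _
        rw [← ENNReal.ofReal_pow h0]
      rw [heq]
      refine le_trans hbl ?_
      apply ENNReal.ofReal_le_ofReal
      rw [div_one]
      nlinarith
  | succ k =>
      set S : Finset ℕ := Finset.Ioc (2^k : ℕ) (2^(k+1) : ℕ) with hSdef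
      have hpow : (2:ℕ)^(k+1) = 2^k * 2 := pow_succ 2 k
      have h2k1 : 1 ≤ (2:ℕ)^k := Nat.one_le_two_pow
      have hbl := block_lintegral_bound hsym hnn hlow hsol S (2^(k+1))
        (by intro i hi; rw [hSdef, Finset.mem_Ioc] at hi; omega)
        (by intro i hi j hj; rw [hSdef, Finset.mem_Ioc] at hi hj; omega)
        ((2^k : ℕ):ℝ) (by positivity)
        (by intro i hi; rw [hSdef, Finset.mem_Ioc] at hi; exact_mod_cast hi.1.le)
      -- rewrite integrand
      have heq : ∫⁻ t in Set.Ioi (0:ℝ), (ENNReal.ofReal (useq f a (k+1) t))^2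
          = ∫⁻ t in Set.Ioi (0:ℝ),
              ENNReal.ofReal ((wgt a k)^2) * ENNReal.ofReal ((Qb f a k t) ^ 2) := by
        refine setLIntegral_congr_fun measurableSet_Ioi ?_
        intro t ht
        beta_reduce
        have hu0 : 0 ≤ useq f a (k+1) t := useq_nonneg hsol (le_of_lt ht) (k+1)
        rw [← ENNReal.ofReal_pow hu0]
        show ENNReal.ofReal ((wgt a k * Qb f a k t)^2) = _
        rw [mul_pow, ENNReal.ofReal_mul (by positivity)]
      rw [heq, lintegral_const_mul' _ _ ENNReal.ofReal_ne_top]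
      have hQS : ∀ t : ℝ, (∑ i ∈ S, (i : ℝ) ^ a * f i t) = Qb f a k t := fun t => rfl
      have hbl' : ∫⁻ t in Set.Ioi (0:ℝ), ENNReal.ofReal ((Qb f a k t) ^ 2)
          ≤ ENNReal.ofReal (smolMass f 0 / ((2^k : ℕ):ℝ)) := by
        refine le_trans (le_of_eq ?_) hbl
        refine setLIntegral_congr_fun measurableSet_Ioi ?_
        intro t ht
        beta_reduce
        rw [hQS t]
      calc (ENNReal.ofReal (ρ ^ (k+1)))⁻¹
            * (ENNReal.ofReal ((wgt a k)^2) * ∫⁻ t in Set.Ioi (0:ℝ),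
                ENNReal.ofReal ((Qb f a k t) ^ 2))
          ≤ (ENNReal.ofReal (ρ ^ (k+1)))⁻¹
            * (ENNReal.ofReal ((wgt a k)^2)
                * ENNReal.ofReal (smolMass f 0 / ((2^k : ℕ):ℝ))) := by
            gcongr
        _ = ENNReal.ofReal ((ρ ^ (k+1))⁻¹)
            * (ENNReal.ofReal ((wgt a k)^2)
                * ENNReal.ofReal (smolMass f 0 / ((2^k : ℕ):ℝ))) := by
            rw [ENNReal.ofReal_inv_of_pos (pow_pos hρ0 (k+1))]
        _ = ENNReal.ofReal ((ρ ^ (k+1))⁻¹ * ((wgt a k)^2 * (smolMass f 0 / ((2^k : ℕ):ℝ)))) := by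
            rw [← ENNReal.ofReal_mul (by positivity), ← ENNReal.ofReal_mul (by positivity)]
        _ = ENNReal.ofReal (2 * ρ ^ (k+1) * smolMass f 0) := by
            congr 1
            rw [hρdef]
            have h := scalar_id a k
            linear_combination smolMass f 0 * h

end Assemble

section Final
variable {α : ℕ → ℕ → ℝ} {f : ℕ → ℝ → ℝ} {a : ℝ}

lemma main_bound (ha1 : 1/2 < a) (ha2 : a ≤ 1)
    (hsym : ∀ m n : ℕ, 1 ≤ m → 1 ≤ n → α m n = α n m)
    (hnn : ∀ m n : ℕ, 1 ≤ m → 1 ≤ n → 0 ≤ α m n)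
    (hlow : ∀ m n : ℕ, 1 ≤ m → 1 ≤ n → ((m : ℝ) * (n : ℝ)) ^ a ≤ α m n)
    (hsol : IsSmoluchowskiSolution α f) :
    ∫⁻ t in Set.Ioi (0:ℝ), ENNReal.ofReal ((smolMass f t) ^ 2)
      ≤ ENNReal.ofReal ((4 * ((1 - (2:ℝ) ^ ((1:ℝ)/2 - a))⁻¹)^2) * smolMass f 0) := by
  set ρ : ℝ := (2:ℝ) ^ ((1:ℝ)/2 - a) with hρdef
  have hρ0 : (0:ℝ) < ρ := two_rpow_pos _
  have hρ1 : ρ < 1 := by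
    rw [hρdef]
    apply Real.rpow_lt_one_of_one_lt_of_neg (by norm_num)
    linarith
  have hM0 : 0 ≤ smolMass f 0 := mass_nonneg hsol le_rfl
  set M0 : ℝ := smolMass f 0 with hM0def
  have hgeo_summ : Summable fun q : ℕ => ρ ^ q := summable_geometric_of_lt_one hρ0.le hρ1
  have hgeo : ∑' q : ℕ, ENNReal.ofReal (ρ ^ q) = ENNReal.ofReal ((1 - ρ)⁻¹) := by
    rw [← ENNReal.ofReal_tsum_of_nonneg (fun q => pow_nonneg hρ0.le q) hgeo_summ,
      tsum_geometric_of_lt_one hρ0.le hρ1]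
  -- measurability
  have humeas : ∀ q : ℕ, AEMeasurable
      (fun t => (ENNReal.ofReal (useq f a q t))^2 / ENNReal.ofReal (ρ ^ q))
      (volume.restrict (Set.Ioi (0:ℝ))) := by
    intro q
    have h1 : AEMeasurable (useq f a q) (volume.restrict (Set.Ioi (0:ℝ))) :=
      ((useq_contOn hsol q).mono Set.Ioi_subset_Ici_self).aemeasurable measurableSet_Ioi
    have h2 : AEMeasurable (fun t => (ENNReal.ofReal (useq f a q t))^2)
        (volume.restrict (Set.Ioi (0:ℝ))) :=
      (ENNReal.measurable_ofReal.comp_aemeasurable h1).pow_const 2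
    simp only [div_eq_mul_inv]
    exact h2.mul_const _
  -- pointwise bound
  have hpt : ∀ t ∈ Set.Ioi (0:ℝ), ENNReal.ofReal ((smolMass f t) ^ 2)
      ≤ 2 * ENNReal.ofReal ((1 - ρ)⁻¹)
        * ∑' q : ℕ, (ENNReal.ofReal (useq f a q t))^2 / ENNReal.ofReal (ρ ^ q) := by
    intro t ht
    rw [ENNReal.ofReal_pow (mass_nonneg hsol (le_of_lt ht))]
    have hcs := enn_cs' (fun q => ENNReal.ofReal (ρ ^ q))
      (fun q => ENNReal.ofReal (useq f a q t))
      (fun q => ((ENNReal.ofReal_pos).2 (pow_pos hρ0 q)).ne')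
      (fun q => ENNReal.ofReal_ne_top)
    have hmass := mass_ptwise hsol ha2 (le_of_lt ht)
    calc (ENNReal.ofReal (smolMass f t))^2
        ≤ (∑' q : ℕ, ENNReal.ofReal (useq f a q t))^2 := by gcongr
      _ ≤ 2 * (∑' q : ℕ, ENNReal.ofReal (ρ ^ q))
          * (∑' q : ℕ, (ENNReal.ofReal (useq f a q t))^2 / ENNReal.ofReal (ρ ^ q)) := hcs
      _ = 2 * ENNReal.ofReal ((1 - ρ)⁻¹)
          * ∑' q : ℕ, (ENNReal.ofReal (useq f a q t))^2 / ENNReal.ofReal (ρ ^ q) := by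
          rw [hgeo]
  have hconst_ne_top : (2 : ℝ≥0∞) * ENNReal.ofReal ((1 - ρ)⁻¹) ≠ ⊤ :=
    ENNReal.mul_ne_top (by norm_num) ENNReal.ofReal_ne_top
  calc ∫⁻ t in Set.Ioi (0:ℝ), ENNReal.ofReal ((smolMass f t) ^ 2)
      ≤ ∫⁻ t in Set.Ioi (0:ℝ), 2 * ENNReal.ofReal ((1 - ρ)⁻¹)
          * ∑' q : ℕ, (ENNReal.ofReal (useq f a q t))^2 / ENNReal.ofReal (ρ ^ q) :=
        lintegral_mono_ae ((ae_restrict_iff' measurableSet_Ioi).2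
          (Filter.Eventually.of_forall hpt))
    _ = 2 * ENNReal.ofReal ((1 - ρ)⁻¹) * ∫⁻ t in Set.Ioi (0:ℝ),
          ∑' q : ℕ, (ENNReal.ofReal (useq f a q t))^2 / ENNReal.ofReal (ρ ^ q) :=
        lintegral_const_mul' _ _ hconst_ne_top
    _ = 2 * ENNReal.ofReal ((1 - ρ)⁻¹) * ∑' q : ℕ, ∫⁻ t in Set.Ioi (0:ℝ),
          (ENNReal.ofReal (useq f a q t))^2 / ENNReal.ofReal (ρ ^ q) := by
        rw [lintegral_tsum humeas]
    _ ≤ 2 * ENNReal.ofReal ((1 - ρ)⁻¹) * ∑' q : ℕ, ENNReal.ofReal (2 * ρ ^ q * M0) := by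
        gcongr with q
        have hdiv : ∀ t : ℝ, (ENNReal.ofReal (useq f a q t))^2 / ENNReal.ofReal (ρ ^ q)
            = (ENNReal.ofReal (ρ ^ q))⁻¹ * (ENNReal.ofReal (useq f a q t))^2 := by
          intro t
          rw [div_eq_mul_inv, mul_comm]
        calc ∫⁻ t in Set.Ioi (0:ℝ),
              (ENNReal.ofReal (useq f a q t))^2 / ENNReal.ofReal (ρ ^ q)
            = ∫⁻ t in Set.Ioi (0:ℝ),
              (ENNReal.ofReal (ρ ^ q))⁻¹ * (ENNReal.ofReal (useq f a q t))^2 := by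
              simp only [hdiv]
          _ = (ENNReal.ofReal (ρ ^ q))⁻¹
              * ∫⁻ t in Set.Ioi (0:ℝ), (ENNReal.ofReal (useq f a q t))^2 :=
              lintegral_const_mul' _ _
                (ENNReal.inv_ne_top.2 ((ENNReal.ofReal_pos).2 (pow_pos hρ0 q)).ne')
          _ ≤ ENNReal.ofReal (2 * ρ ^ q * M0) := perq hsym hnn hlow hsol q
    _ = 2 * ENNReal.ofReal ((1 - ρ)⁻¹) * ENNReal.ofReal (2 * M0 * (1 - ρ)⁻¹) := by
        congr 1
        have hsumm2 : Summable fun q : ℕ => 2 * ρ ^ q * M0 := by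
          have := hgeo_summ.mul_left (2 * M0)
          exact this.congr fun q => by ring
        rw [← ENNReal.ofReal_tsum_of_nonneg
          (fun q => by positivity) hsumm2]
        congr 1
        have : ∀ q : ℕ, 2 * ρ ^ q * M0 = (2 * M0) * ρ ^ q := fun q => by ring
        rw [tsum_congr this, tsum_mul_left, tsum_geometric_of_lt_one hρ0.le hρ1]
    _ = ENNReal.ofReal ((4 * ((1 - ρ)⁻¹)^2) * M0) := by
        have h1ρ : (0:ℝ) < (1 - ρ)⁻¹ := inv_pos.2 (by linarith)
        rw [← ENNReal.ofReal_ofNat 2, ← ENNReal.ofReal_mul (by norm_num),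
          ← ENNReal.ofReal_mul (by positivity)]
        congr 1
        ring

end Final

/-- For every `a > 1/2` there is a constant `C₀ = C₀(a)` such that any mass-finite,
mass-nonincreasing solution of the Smoluchowski equation with a symmetric nonnegative
kernel `α(m,n) ≥ (mn)^a` satisfies `∫₀^∞ M(t)² dt ≤ C₀ · M(0)`; in particular, if
`M(0) > 0` then `M(t) < M(0)` for every `t > C₀ / M(0)`. -/
theorem gelation_before_time_C0_div_M0 :
    ∀ a : ℝ, 1 / 2 < a → ∃ C₀ : ℝ, 0 < C₀ ∧
      ∀ (α : ℕ → ℕ → ℝ) (f : ℕ → ℝ → ℝ),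
        (∀ m n : ℕ, 1 ≤ m → 1 ≤ n → α m n = α n m) →
        (∀ m n : ℕ, 1 ≤ m → 1 ≤ n → 0 ≤ α m n) →
        (∀ m n : ℕ, 1 ≤ m → 1 ≤ n → ((m : ℝ) * (n : ℝ)) ^ a ≤ α m n) →
        IsSmoluchowskiSolution α f →
        (∀ s t : ℝ, 0 ≤ s → s ≤ t → smolMass f t ≤ smolMass f s) →
        (∫⁻ t in Set.Ioi (0 : ℝ), ENNReal.ofReal ((smolMass f t) ^ 2)
            ≤ ENNReal.ofReal (C₀ * smolMass f 0)) ∧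
        (0 < smolMass f 0 → ∀ t : ℝ, C₀ / smolMass f 0 < t →
          smolMass f t < smolMass f 0) := by
  intro a ha
  have ha'1 : 1/2 < min a 1 := lt_min ha (by norm_num)
  have ha'2 : min a 1 ≤ 1 := min_le_right a 1
  have hρ0 : (0:ℝ) < (2:ℝ) ^ ((1:ℝ)/2 - min a 1) := two_rpow_pos _
  have hρ1 : (2:ℝ) ^ ((1:ℝ)/2 - min a 1) < 1 :=
    Real.rpow_lt_one_of_one_lt_of_neg (by norm_num) (by linarith)
  have h1ρ : (0:ℝ) < (1 - (2:ℝ) ^ ((1:ℝ)/2 - min a 1))⁻¹ := inv_pos.2 (by linarith)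
  refine ⟨4 * ((1 - (2:ℝ) ^ ((1:ℝ)/2 - min a 1))⁻¹)^2, by positivity, ?_⟩
  intro α f hsym hnn hlow hsol hmono
  have hC0pos : (0:ℝ) < 4 * ((1 - (2:ℝ) ^ ((1:ℝ)/2 - min a 1))⁻¹)^2 := by positivity
  have hlow' : ∀ m n : ℕ, 1 ≤ m → 1 ≤ n → ((m:ℝ)*(n:ℝ)) ^ (min a 1) ≤ α m n := by
    intro m n hm hn
    refine le_trans ?_ (hlow m n hm hn)
    have h1m : (1:ℝ) ≤ (m:ℝ) := by exact_mod_cast hm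
    have h1n : (1:ℝ) ≤ (n:ℝ) := by exact_mod_cast hn
    have h1 : (1:ℝ) ≤ (m:ℝ) * (n:ℝ) :=
      le_trans h1m (le_mul_of_one_le_right (by linarith) h1n)
    exact Real.rpow_le_rpow_of_exponent_le h1 (min_le_left a 1)
  have hint := main_bound ha'1 ha'2 hsym hnn hlow' hsol
  refine ⟨hint, ?_⟩
  intro hM0pos t htC
  by_contra hcon
  push_neg at hcon
  have ht0 : 0 < t := lt_trans (div_pos hC0pos hM0pos) htC
  have hconst : ∀ s ∈ Set.Ioc (0:ℝ) t, smolMass f s = smolMass f 0 := by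
    intro s hs
    have h1 : smolMass f s ≤ smolMass f 0 := hmono 0 s le_rfl hs.1.le
    have h2 : smolMass f t ≤ smolMass f s := hmono s t hs.1.le hs.2
    linarith
  have hlow_int : ENNReal.ofReal ((smolMass f 0)^2) * ENNReal.ofReal t
      ≤ ENNReal.ofReal ((4 * ((1 - (2:ℝ) ^ ((1:ℝ)/2 - min a 1))⁻¹)^2) * smolMass f 0) := by
    calc ENNReal.ofReal ((smolMass f 0)^2) * ENNReal.ofReal t
        = ∫⁻ _ in Set.Ioc (0:ℝ) t, ENNReal.ofReal ((smolMass f 0)^2) := by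
          rw [setLIntegral_const, Real.volume_Ioc, sub_zero]
      _ = ∫⁻ s in Set.Ioc (0:ℝ) t, ENNReal.ofReal ((smolMass f s) ^2) := by
          refine (setLIntegral_congr_fun measurableSet_Ioc ?_).symm
          intro s hs
          beta_reduce
          rw [hconst s hs]
      _ ≤ ∫⁻ s in Set.Ioi (0:ℝ), ENNReal.ofReal ((smolMass f s) ^2) :=
          lintegral_mono' (Measure.restrict_mono Set.Ioc_subset_Ioi_self le_rfl) (le_refl _)
      _ ≤ _ := hint
  rw [← ENNReal.ofReal_mul (sq_nonneg (smolMass f 0))] at hlow_int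
  have hreal : (smolMass f 0)^2 * t ≤ (4 * ((1 - (2:ℝ) ^ ((1:ℝ)/2 - min a 1))⁻¹)^2) * smolMass f 0 :=
    (ENNReal.ofReal_le_ofReal_iff (by positivity)).1 hlow_int
  have hlt : (4 * ((1 - (2:ℝ) ^ ((1:ℝ)/2 - min a 1))⁻¹)^2) < t * smolMass f 0 :=
    (div_lt_iff₀ hM0pos).1 htC
  nlinarith [hM0pos]
end

section
/- Let q > 1, δ ∈ (0,1) and T > 0, and for each integer k ≥ 1 let M_k : [0,T] → [0,∞) be a function such that: M_1(t) = 1 for all t ∈ [0,T]; M_{k+1}(0) = 0 for every k ≥ 1; and each M_{k+1} is differentiable on [0,T] with M_{k+1}'(t) ≥ k^{q−1}(1−δ)·M_k(t) for all t ∈ [0,T]. Then for every k ≥ 1 and every t ∈ [0,T], M_{k+1}(t) ≥ (k!)^{q−2}·((1−δ)t)^k. -/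
/-- Comparison lemma: if `f 0 = 0` and `f` has a derivative within `[0,T]` bounded below
by `c * n * t^(n-1)`, then `f t ≥ c * t^n` on `[0,T]`. -/
lemma poly_lower_bound {T c : ℝ} (hT : 0 < T) (n : ℕ) (hn : 1 ≤ n) {f : ℝ → ℝ}
    (h0 : f 0 = 0)
    (hd : ∀ t ∈ Set.Icc (0 : ℝ) T, ∃ d : ℝ, HasDerivWithinAt f d (Set.Icc (0 : ℝ) T) t ∧
      c * n * t ^ (n - 1) ≤ d) :
    ∀ t ∈ Set.Icc (0 : ℝ) T, c * t ^ n ≤ f t := by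
  choose! d hdd hdle using hd
  set h : ℝ → ℝ := fun t => f t - c * t ^ n with hh
  have hg : ∀ t : ℝ, HasDerivAt (fun x : ℝ => c * x ^ n) (c * n * t ^ (n - 1)) t := by
    intro t
    have := (hasDerivAt_pow n t).const_mul c
    simpa [mul_assoc] using this
  have key : MonotoneOn h (Set.Icc 0 T) := by
    apply monotoneOn_of_hasDerivWithinAt_nonneg (convex_Icc 0 T)
      (f' := fun t => d t - c * n * t ^ (n - 1))
    · intro t ht
      exact ((hdd t ht).sub ((hg t).hasDerivWithinAt)).continuousWithinAt
    · rw [interior_Icc]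
      intro t ht
      exact (((hdd t (Set.Ioo_subset_Icc_self ht)).sub
        ((hg t).hasDerivWithinAt)).mono Set.Ioo_subset_Icc_self)
    · rw [interior_Icc]
      intro t ht
      have := hdle t (Set.Ioo_subset_Icc_self ht)
      simp only [sub_nonneg]
      linarith
  intro t ht
  have h0' : (0 : ℝ) ∈ Set.Icc (0 : ℝ) T := ⟨le_refl _, hT.le⟩
  have h2 : f 0 - c * 0 ^ n ≤ f t - c * t ^ n := key h0' ht ht.1
  rw [h0, zero_pow (by omega : n ≠ 0)] at h2
  linarith

/-- Differential-inequality lower bound on tail masses: if `M_1 ≡ 1` on `[0,T]`,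
`M_{k+1}(0) = 0`, and each `M_{k+1}` is differentiable on `[0,T]` with
`M_{k+1}'(t) ≥ k^{q-1}(1-δ) M_k(t)`, then
`M_{k+1}(t) ≥ (k!)^{q-2} ((1-δ)t)^k` for all `k ≥ 1` and `t ∈ [0,T]`. -/
theorem tail_mass_lower_bound
    (q δ T : ℝ) (hq : 1 < q) (hδ : δ ∈ Set.Ioo (0 : ℝ) 1) (hT : 0 < T)
    (M : ℕ → ℝ → ℝ)
    (hnonneg : ∀ k : ℕ, 1 ≤ k → ∀ t ∈ Set.Icc (0 : ℝ) T, 0 ≤ M k t)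
    (hM1 : ∀ t ∈ Set.Icc (0 : ℝ) T, M 1 t = 1)
    (hinit : ∀ k : ℕ, 1 ≤ k → M (k + 1) 0 = 0)
    (hderiv : ∀ k : ℕ, 1 ≤ k → ∀ t ∈ Set.Icc (0 : ℝ) T,
      ∃ d : ℝ, HasDerivWithinAt (fun u => M (k + 1) u) d (Set.Icc (0 : ℝ) T) t ∧
        (k : ℝ) ^ (q - 1) * (1 - δ) * M k t ≤ d) :
    ∀ k : ℕ, 1 ≤ k → ∀ t ∈ Set.Icc (0 : ℝ) T,
      ((Nat.factorial k : ℝ)) ^ (q - 2) * ((1 - δ) * t) ^ k ≤ M (k + 1) t := by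
  have hδ1 : (0 : ℝ) < 1 - δ := by linarith [hδ.2]
  -- reduce to the form c_k * t^k ≤ M (k+1) t
  suffices H : ∀ k : ℕ, 1 ≤ k → ∀ t ∈ Set.Icc (0 : ℝ) T,
      ((Nat.factorial k : ℝ)) ^ (q - 2) * (1 - δ) ^ k * t ^ k ≤ M (k + 1) t by
    intro k hk t ht
    have := H k hk t ht
    calc ((Nat.factorial k : ℝ)) ^ (q - 2) * ((1 - δ) * t) ^ k
        = ((Nat.factorial k : ℝ)) ^ (q - 2) * (1 - δ) ^ k * t ^ k := by rw [mul_pow]; ring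
      _ ≤ M (k + 1) t := this
  intro k hk
  induction k, hk using Nat.le_induction with
  | base =>
    intro t ht
    have h0 : M 2 0 = 0 := hinit 1 le_rfl
    have hb := poly_lower_bound (c := 1 - δ) hT 1 le_rfl h0 ?_ t ht
    · simpa using hb
    · intro s hs
      obtain ⟨d, hdd, hdle⟩ := hderiv 1 le_rfl s hs
      refine ⟨d, hdd, ?_⟩
      rw [hM1 s hs] at hdle
      simp only [Nat.cast_one, Real.one_rpow, one_mul, mul_one] at hdle ⊢
      simpa using hdle
  | succ k hk ih =>
    intro t ht
    have hkpos : (0 : ℝ) < (k : ℝ) + 1 := by positivity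
    have hfac : (0 : ℝ) < (Nat.factorial k : ℝ) := by
      exact_mod_cast Nat.factorial_pos k
    -- the constant
    set c : ℝ := ((Nat.factorial (k + 1) : ℝ)) ^ (q - 2) * (1 - δ) ^ (k + 1) with hc
    have h0 : M (k + 2) 0 = 0 := hinit (k + 1) (by omega)
    have hb := poly_lower_bound (c := c) hT (k + 1) (by omega) h0 ?_ t ht
    · simpa [hc, mul_assoc] using hb
    · intro s hs
      obtain ⟨d, hdd, hdle⟩ := hderiv (k + 1) (by omega) s hs
      refine ⟨d, hdd, ?_⟩
      have hind := ih s hs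
      have hcoef : (0 : ℝ) ≤ ((k : ℝ) + 1) ^ (q - 1) * (1 - δ) :=
        mul_nonneg (Real.rpow_nonneg hkpos.le _) hδ1.le
      have step1 : ((k : ℝ) + 1) ^ (q - 1) * (1 - δ) *
          (((Nat.factorial k : ℝ)) ^ (q - 2) * (1 - δ) ^ k * s ^ k) ≤
          ((k : ℝ) + 1) ^ (q - 1) * (1 - δ) * M (k + 1) s :=
        mul_le_mul_of_nonneg_left hind hcoef
      have heq : c * ((k : ℝ) + 1) =
          ((k : ℝ) + 1) ^ (q - 1) * (1 - δ) * (((Nat.factorial k : ℝ)) ^ (q - 2) * (1 - δ) ^ k) := by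
        rw [hc, Nat.factorial_succ, Nat.cast_mul]
        push_cast
        rw [Real.mul_rpow (by positivity) hfac.le]
        have hpow : ((k : ℝ) + 1) ^ (q - 2) * ((k : ℝ) + 1) = ((k : ℝ) + 1) ^ (q - 1) := by
          have h1 := Real.rpow_add hkpos (q - 2) 1
          rw [Real.rpow_one] at h1
          rw [← h1]; ring_nf
        calc ((k : ℝ) + 1) ^ (q - 2) * (Nat.factorial k : ℝ) ^ (q - 2) * (1 - δ) ^ (k + 1) * ((k : ℝ) + 1)
            = (((k : ℝ) + 1) ^ (q - 2) * ((k : ℝ) + 1)) *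
              ((Nat.factorial k : ℝ) ^ (q - 2) * ((1 - δ) * (1 - δ) ^ k)) := by ring
          _ = ((k : ℝ) + 1) ^ (q - 1) * (1 - δ) *
              ((Nat.factorial k : ℝ) ^ (q - 2) * (1 - δ) ^ k) := by rw [hpow]; ring
      push_cast at hdle
      have hstep : c * ((k : ℝ) + 1) * s ^ k ≤ d := by
        calc c * ((k : ℝ) + 1) * s ^ k
            = ((k : ℝ) + 1) ^ (q - 1) * (1 - δ) *
              (((Nat.factorial k : ℝ)) ^ (q - 2) * (1 - δ) ^ k * s ^ k) := by rw [heq]; ring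
          _ ≤ ((k : ℝ) + 1) ^ (q - 1) * (1 - δ) * M (k + 1) s := step1
          _ ≤ d := hdle
      have : c * ((k + 1 : ℕ) : ℝ) * s ^ (k + 1 - 1) = c * ((k : ℝ) + 1) * s ^ k := by
        push_cast; norm_num
      rw [this]
      exact hstep
end

section
/- Let q ≥ 1 be real, let k ≥ 1 be an integer, and let f : ℕ → [0,∞) satisfy ∑_{n≥1} n·f_n = 1 and ∑_{n≥1} n^{q+1}·f_n < ∞. Then (1/2)·∑_{m≥1} ∑_{n≥1} (m^q + n^q)·f_m·f_n·Δ_{k+1}(m,n) ≥ k^{q−1}·M_k·(1 − M_{k+1}), where M_r = ∑_{n≥r} n·f_n. -/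
/-- `Δ_K(m,n) = (m+n)·1[m+n ≥ K] − m·1[m ≥ K] − n·1[n ≥ K]`, the change of the
test function `ψ(j) = j·1[j ≥ K]` when clusters of sizes `m` and `n` merge. -/
noncomputable def deltaMass (K m n : ℕ) : ℝ :=
  (if K ≤ m + n then ((m : ℝ) + (n : ℝ)) else 0)
    - (if K ≤ m then (m : ℝ) else 0) - (if K ≤ n then (n : ℝ) else 0)

/-- The tail mass of the profile `f` above level `r`: `∑_{n ≥ r} n · f_n`. -/
noncomputable def tailMass (f : ℕ → ℝ) (r : ℕ) : ℝ :=
  ∑' n : ℕ, ((n : ℝ) + (r : ℝ)) * f (n + r)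

lemma deltaMass_eq_int (K M N : ℕ) :
    deltaMass K M N = (((if K ≤ M + N then (M + N : ℤ) else 0)
      - (if K ≤ M then (M : ℤ) else 0) - (if K ≤ N then (N : ℤ) else 0) : ℤ) : ℝ) := by
  unfold deltaMass
  split_ifs <;> push_cast <;> ring

lemma deltaMass_nonneg (K M N : ℕ) : 0 ≤ deltaMass K M N := by
  rw [deltaMass_eq_int]
  have h : (0:ℤ) ≤ ((if K ≤ M + N then (M + N : ℤ) else 0)
      - (if K ≤ M then (M : ℤ) else 0) - (if K ≤ N then (N : ℤ) else 0)) := by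
    split_ifs <;> omega
  exact_mod_cast h

lemma deltaMass_le (K M N : ℕ) : deltaMass K M N ≤ (M:ℝ) + (N:ℝ) := by
  rw [deltaMass_eq_int]
  have h : ((if K ≤ M + N then (M + N : ℤ) else 0)
      - (if K ≤ M then (M : ℤ) else 0) - (if K ≤ N then (N : ℤ) else 0)) ≤ (M:ℤ) + N := by
    split_ifs <;> omega
  exact_mod_cast h

lemma deltaMass_key (k M N : ℕ) (hM : 1 ≤ M) (hN : 1 ≤ N) (hk : 1 ≤ k) :
    (if k ≤ M ∧ N ≤ k then (N:ℝ) else 0) + (if k ≤ N ∧ M ≤ k then (M:ℝ) else 0)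
      ≤ deltaMass (k+1) M N := by
  rw [deltaMass_eq_int]
  have h : ((if k ≤ M ∧ N ≤ k then (N:ℤ) else 0) + (if k ≤ N ∧ M ≤ k then (M:ℤ) else 0))
      ≤ ((if k+1 ≤ M + N then (M + N : ℤ) else 0)
      - (if k+1 ≤ M then (M : ℤ) else 0) - (if k+1 ≤ N then (N : ℤ) else 0)) := by
    split_ifs <;> omega
  have h1 : (if k ≤ M ∧ N ≤ k then (N:ℝ) else 0) = (((if k ≤ M ∧ N ≤ k then (N:ℤ) else 0) : ℤ) : ℝ) := by
    split_ifs <;> simp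
  have h2 : (if k ≤ N ∧ M ≤ k then (M:ℝ) else 0) = (((if k ≤ N ∧ M ≤ k then (M:ℤ) else 0) : ℤ) : ℝ) := by
    split_ifs <;> simp
  rw [h1, h2, ← Int.cast_add]
  exact_mod_cast h

/-- If `q ≥ 1`, `k ≥ 1` and `f : ℕ → [0,∞)` has unit mass `∑_{n≥1} n f_n = 1` and a
finite `(q+1)`-moment, then the coagulation flux of mass into clusters of size at
least `k+1` for the kernel `m^q + n^q` is at least `k^{q-1} M_k (1 − M_{k+1})`. -/
theorem flux_into_large_clusters_lower_bound
    (q : ℝ) (hq : 1 ≤ q) (k : ℕ) (hk : 1 ≤ k)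
    (f : ℕ → ℝ) (hf : ∀ n : ℕ, 0 ≤ f n)
    (hmass : ∑' n : ℕ, ((n : ℝ) + 1) * f (n + 1) = 1)
    (hmoment : Summable (fun n : ℕ => ((n : ℝ) + 1) ^ (q + 1) * f (n + 1))) :
    (k : ℝ) ^ (q - 1) * tailMass f k * (1 - tailMass f (k + 1))
      ≤ (1 / 2) * ∑' (m : ℕ) (n : ℕ),
          (((m : ℝ) + 1) ^ q + ((n : ℝ) + 1) ^ q) * f (m + 1) * f (n + 1)
            * deltaMass (k + 1) (m + 1) (n + 1) := by
  have hq0 : (0:ℝ) ≤ q := by linarith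
  have hq1 : (0:ℝ) ≤ q - 1 := by linarith
  have hx1 : ∀ n : ℕ, (1:ℝ) ≤ (n:ℝ) + 1 := fun n => by
    have := Nat.cast_nonneg (α := ℝ) n; linarith
  have hx0 : ∀ n : ℕ, (0:ℝ) < (n:ℝ) + 1 := fun n => by
    have := hx1 n; linarith
  obtain ⟨j, rfl⟩ : ∃ j, k = j + 1 := ⟨k - 1, by omega⟩
  set k := j + 1 with hkdef
  -- moment function
  set w : ℕ → ℝ := fun n => ((n:ℝ)+1)^(q+1) * f (n+1) with hw
  have hw0 : ∀ n, 0 ≤ w n := fun n => mul_nonneg (Real.rpow_nonneg (hx0 n).le _) (hf _)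
  -- mass function
  set g : ℕ → ℝ := fun n => ((n:ℝ)+1) * f (n+1) with hgdef
  have hg0 : ∀ n, 0 ≤ g n := fun n => mul_nonneg (hx0 n).le (hf _)
  have hg : Summable g := by
    apply Summable.of_nonneg_of_le hg0 ?_ hmoment
    intro n
    have h1 : ((n:ℝ)+1) ≤ ((n:ℝ)+1)^(q+1) := by
      have := Real.rpow_le_rpow_of_exponent_le (hx1 n) (by linarith : (1:ℝ) ≤ q+1)
      rwa [Real.rpow_one] at this
    exact mul_le_mul_of_nonneg_right h1 (hf _)
  -- q-moment function
  set p : ℕ → ℝ := fun n => ((n:ℝ)+1)^q * f (n+1) with hpdef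
  have hp0 : ∀ n, 0 ≤ p n := fun n => mul_nonneg (Real.rpow_nonneg (hx0 n).le _) (hf _)
  have hp : Summable p := by
    apply Summable.of_nonneg_of_le hp0 ?_ hmoment
    intro n
    exact mul_le_mul_of_nonneg_right
      (Real.rpow_le_rpow_of_exponent_le (hx1 n) (by linarith : q ≤ q+1)) (hf _)
  -- u and v
  set u : ℕ → ℝ := fun m => if k ≤ m+1 then ((m:ℝ)+1)^q * f (m+1) else 0 with hudef
  set v : ℕ → ℝ := fun n => if n+1 ≤ k then ((n:ℝ)+1) * f (n+1) else 0 with hvdef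
  have hu0 : ∀ m, 0 ≤ u m := fun m => by
    simp only [hudef]; split_ifs
    · exact hp0 m
    · exact le_rfl
  have hv0 : ∀ n, 0 ≤ v n := fun n => by
    simp only [hvdef]; split_ifs
    · exact hg0 n
    · exact le_rfl
  have hu : Summable u := by
    apply Summable.of_nonneg_of_le hu0 ?_ hp
    intro m
    simp only [hudef]; split_ifs
    · exact le_rfl
    · exact hp0 m
  have hv : Summable v := by
    apply summable_of_ne_finset_zero (s := Finset.range k)
    intro n hn
    simp only [Finset.mem_range, not_lt] at hn
    simp only [hvdef]
    rw [if_neg (by omega)]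
  set U := ∑' m, u m with hUdef
  set V := ∑' n, v n with hVdef
  have hU0 : 0 ≤ U := tsum_nonneg hu0
  have hV0 : 0 ≤ V := tsum_nonneg hv0
  -- the double-sum term
  set T : ℕ → ℕ → ℝ := fun m n =>
    (((m:ℝ)+1)^q + ((n:ℝ)+1)^q) * f (m+1) * f (n+1) * deltaMass (k+1) (m+1) (n+1) with hTdef
  have hT0 : ∀ m n, 0 ≤ T m n := by
    intro m n
    simp only [hTdef]
    apply mul_nonneg _ (deltaMass_nonneg _ _ _)
    apply mul_nonneg (mul_nonneg _ (hf _)) (hf _)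
    exact add_nonneg (Real.rpow_nonneg (hx0 m).le _) (Real.rpow_nonneg (hx0 n).le _)
  -- pointwise upper bound for T
  have hT_le : ∀ m n, T m n ≤ 4 * w m * w n := by
    intro m n
    have hfm := hf (m+1); have hfn := hf (n+1)
    have hM := hx1 m; have hN := hx1 n
    have hAq : (0:ℝ) ≤ ((m:ℝ)+1)^q := Real.rpow_nonneg (hx0 m).le _
    have hBq : (0:ℝ) ≤ ((n:ℝ)+1)^q := Real.rpow_nonneg (hx0 n).le _
    have hD_le : deltaMass (k+1) (m+1) (n+1) ≤ ((m:ℝ)+1) + ((n:ℝ)+1) := by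
      have := deltaMass_le (k+1) (m+1) (n+1)
      push_cast at this; linarith
    have hD0 := deltaMass_nonneg (k+1) (m+1) (n+1)
    have hprod : (((m:ℝ)+1) * ((n:ℝ)+1))^q = ((m:ℝ)+1)^q * ((n:ℝ)+1)^q :=
      Real.mul_rpow (hx0 m).le (hx0 n).le
    have hA_le : ((m:ℝ)+1)^q ≤ ((m:ℝ)+1)^q * ((n:ℝ)+1)^q := by
      rw [← hprod]
      exact Real.rpow_le_rpow (hx0 m).le (le_mul_of_one_le_right (hx0 m).le hN) hq0
    have hB_le : ((n:ℝ)+1)^q ≤ ((m:ℝ)+1)^q * ((n:ℝ)+1)^q := by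
      rw [← hprod]
      exact Real.rpow_le_rpow (hx0 n).le (le_mul_of_one_le_left (hx0 n).le hM) hq0
    have hrw1 : ((m:ℝ)+1)^(q+1) = ((m:ℝ)+1)^q * ((m:ℝ)+1) := Real.rpow_add_one (hx0 m).ne' q
    have hrw2 : ((n:ℝ)+1)^(q+1) = ((n:ℝ)+1)^q * ((n:ℝ)+1) := Real.rpow_add_one (hx0 n).ne' q
    simp only [hTdef, hw]
    rw [hrw1, hrw2]
    calc (((m:ℝ)+1)^q + ((n:ℝ)+1)^q) * f (m+1) * f (n+1) * deltaMass (k+1) (m+1) (n+1)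
        ≤ (((m:ℝ)+1)^q + ((n:ℝ)+1)^q) * f (m+1) * f (n+1) * (((m:ℝ)+1) + ((n:ℝ)+1)) := by
          apply mul_le_mul_of_nonneg_left hD_le
          exact mul_nonneg (mul_nonneg (add_nonneg hAq hBq) hfm) hfn
      _ ≤ (2 * (((m:ℝ)+1)^q * ((n:ℝ)+1)^q)) * f (m+1) * f (n+1) * (2 * (((m:ℝ)+1) * ((n:ℝ)+1))) := by
          have h1 : ((m:ℝ)+1)^q + ((n:ℝ)+1)^q ≤ 2 * (((m:ℝ)+1)^q * ((n:ℝ)+1)^q) := by linarith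
          have h2 : ((m:ℝ)+1) + ((n:ℝ)+1) ≤ 2 * (((m:ℝ)+1) * ((n:ℝ)+1)) := by nlinarith
          have hMN0 : (0:ℝ) ≤ ((m:ℝ)+1) + ((n:ℝ)+1) := by linarith
          have hq2 : (0:ℝ) ≤ (2 : ℝ) * (((m:ℝ)+1)^q * ((n:ℝ)+1)^q) := by
            have := mul_nonneg hAq hBq; linarith
          have hab : (((m:ℝ)+1)^q + ((n:ℝ)+1)^q) * f (m+1) * f (n+1)
              ≤ (2 * (((m:ℝ)+1)^q * ((n:ℝ)+1)^q)) * f (m+1) * f (n+1) :=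
            mul_le_mul_of_nonneg_right (mul_le_mul_of_nonneg_right h1 hfm) hfn
          exact mul_le_mul hab h2 hMN0 (mul_nonneg (mul_nonneg hq2 hfm) hfn)
      _ = 4 * (((m:ℝ)+1)^q * ((m:ℝ)+1) * f (m+1)) * (((n:ℝ)+1)^q * ((n:ℝ)+1) * f (n+1)) := by
          ring
  -- summability of T in n, and of the inner sums
  have hTm : ∀ m, Summable (fun n => T m n) := by
    intro m
    apply Summable.of_nonneg_of_le (hT0 m) (hT_le m) (hmoment.mul_left (4 * w m))
  set Cmom := ∑' n, w n with hCdef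
  have hTtsum_le : ∀ m, ∑' n, T m n ≤ 4 * w m * Cmom := by
    intro m
    calc ∑' n, T m n ≤ ∑' n, (4 * w m) * w n :=
          Summable.tsum_le_tsum (hT_le m) (hTm m) (hmoment.mul_left _)
      _ = 4 * w m * Cmom := tsum_mul_left
  have hS2 : Summable (fun m => ∑' n, T m n) := by
    apply Summable.of_nonneg_of_le (fun m => tsum_nonneg (hT0 m)) hTtsum_le
    exact (hmoment.mul_left 4).mul_right Cmom
  -- pointwise key inequality
  have key : ∀ m n, u m * v n + v m * u n ≤ T m n := by
    intro m n
    have hfm := hf (m+1); have hfn := hf (n+1)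
    have hAq : (0:ℝ) ≤ ((m:ℝ)+1)^q := Real.rpow_nonneg (hx0 m).le _
    have hBq : (0:ℝ) ≤ ((n:ℝ)+1)^q := Real.rpow_nonneg (hx0 n).le _
    have hD := deltaMass_key k (m+1) (n+1) (by omega) (by omega) (by omega)
    push_cast at hD
    have hD0 := deltaMass_nonneg (k+1) (m+1) (n+1)
    have hM0 := (hx0 m).le; have hN0 := (hx0 n).le
    have step1a : u m * v n
        ≤ (((m:ℝ)+1)^q + ((n:ℝ)+1)^q) * f (m+1) * f (n+1) *
          (if k ≤ m+1 ∧ n+1 ≤ k then ((n:ℝ)+1) else 0) := by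
      simp only [hudef, hvdef]
      by_cases h1 : k ≤ m+1 <;> by_cases h2 : n+1 ≤ k <;>
        simp only [h1, h2, if_true, if_false, and_true, and_false, true_and, false_and,
          if_pos, ite_true, ite_false, mul_zero, zero_mul, le_refl]
      · nlinarith [mul_nonneg (mul_nonneg (mul_nonneg hBq hfm) hfn) hN0]
    have step1b : v m * u n
        ≤ (((m:ℝ)+1)^q + ((n:ℝ)+1)^q) * f (m+1) * f (n+1) *
          (if k ≤ n+1 ∧ m+1 ≤ k then ((m:ℝ)+1) else 0) := by
      simp only [hudef, hvdef]
      by_cases h1 : k ≤ n+1 <;> by_cases h2 : m+1 ≤ k <;>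
        simp only [h1, h2, if_true, if_false, and_true, and_false, true_and, false_and,
          if_pos, ite_true, ite_false, mul_zero, zero_mul, le_refl]
      · nlinarith [mul_nonneg (mul_nonneg (mul_nonneg hAq hfm) hfn) hM0]
    have step1 : u m * v n + v m * u n
        ≤ (((m:ℝ)+1)^q + ((n:ℝ)+1)^q) * f (m+1) * f (n+1) *
          ((if k ≤ m+1 ∧ n+1 ≤ k then ((n:ℝ)+1) else 0)
            + (if k ≤ n+1 ∧ m+1 ≤ k then ((m:ℝ)+1) else 0)) := by
      rw [mul_add]
      exact add_le_add step1a step1b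
    have step2 : (((m:ℝ)+1)^q + ((n:ℝ)+1)^q) * f (m+1) * f (n+1) *
          ((if k ≤ m+1 ∧ n+1 ≤ k then ((n:ℝ)+1) else 0)
            + (if k ≤ n+1 ∧ m+1 ≤ k then ((m:ℝ)+1) else 0))
        ≤ T m n := by
      simp only [hTdef]
      apply mul_le_mul_of_nonneg_left hD
      exact mul_nonneg (mul_nonneg (add_nonneg hAq hBq) hfm) hfn
    exact le_trans step1 step2
  -- inner sums of the lower bound
  have hLsum : ∀ m, Summable (fun n => u m * v n + v m * u n) :=
    fun m => (hv.mul_left (u m)).add (hu.mul_left (v m))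
  have hinner : ∀ m, ∑' n, (u m * v n + v m * u n) = u m * V + v m * U := by
    intro m
    rw [Summable.tsum_add (hv.mul_left (u m)) (hu.mul_left (v m)), tsum_mul_left, tsum_mul_left]
  have hmain : U * V + V * U ≤ ∑' m, ∑' n, T m n := by
    have h1 : ∑' m, (u m * V + v m * U) = U * V + V * U := by
      rw [Summable.tsum_add (hu.mul_right V) (hv.mul_right U), tsum_mul_right, tsum_mul_right]
    rw [← h1]
    apply Summable.tsum_le_tsum _ ((hu.mul_right V).add (hv.mul_right U)) hS2
    intro m
    rw [← hinner m]
    exact Summable.tsum_le_tsum (key m) (hLsum m) (hTm m)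
  -- identify V
  have hsplit := Summable.sum_add_tsum_nat_add k hg
  rw [hmass] at hsplit
  have htail1 : tailMass f (k+1) = ∑' i, g (i + k) := by
    unfold tailMass
    apply tsum_congr
    intro i
    have e : i + (k+1) = i + k + 1 := by omega
    rw [e]
    simp only [hgdef]
    push_cast
    ring_nf
  have hV : V = 1 - tailMass f (k+1) := by
    have h2 : V = ∑ i ∈ Finset.range k, v i + ∑' i, v (i + k) :=
      (Summable.sum_add_tsum_nat_add k hv).symm
    have h3 : ∀ i, v (i + k) = 0 := by
      intro i; simp only [hvdef]; rw [if_neg (by omega)]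
    have h4 : ∀ i ∈ Finset.range k, v i = g i := by
      intro i hi
      simp only [Finset.mem_range] at hi
      simp only [hvdef, hgdef]
      rw [if_pos (by omega)]
    rw [Finset.sum_congr rfl h4] at h2
    simp only [h3, tsum_zero, add_zero] at h2
    rw [htail1]
    linarith
  -- identify/bound U
  have htailk : tailMass f k = ∑' i : ℕ, ((i:ℝ) + k) * f (i + k) := rfl
  have hgk : Summable (fun i : ℕ => ((i:ℝ) + k) * f (i + k)) := by
    have h1 := (summable_nat_add_iff j).mpr hg
    apply h1.congr
    intro i
    simp only [hgdef]
    have e : i + j + 1 = i + k := by omega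
    rw [e]
    push_cast
    ring_nf
    rw [hkdef]; push_cast; ring
  have hgk0 : ∀ i : ℕ, 0 ≤ ((i:ℝ) + k) * f (i + k) := by
    intro i
    apply mul_nonneg _ (hf _)
    have : (0:ℝ) ≤ (i:ℝ) := Nat.cast_nonneg i
    have : (0:ℝ) ≤ (k:ℝ) := Nat.cast_nonneg k
    linarith [Nat.cast_nonneg (α := ℝ) i]
  have hMk0 : 0 ≤ tailMass f k := tsum_nonneg hgk0
  have huk : Summable (fun i : ℕ => ((i:ℝ) + k)^q * f (i + k)) := by
    have h1 := (summable_nat_add_iff j).mpr hu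
    apply h1.congr
    intro i
    simp only [hudef]
    rw [if_pos (by omega)]
    have e : i + j + 1 = i + k := by omega
    have e2 : ((i + j : ℕ):ℝ) + 1 = (i:ℝ) + k := by push_cast [hkdef]; ring
    rw [e, e2]
  have hUeq : U = ∑' i : ℕ, ((i:ℝ) + k)^q * f (i + k) := by
    have h2 : U = ∑ i ∈ Finset.range j, u i + ∑' i, u (i + j) :=
      (Summable.sum_add_tsum_nat_add j hu).symm
    have h3 : ∀ i ∈ Finset.range j, u i = 0 := by
      intro i hi
      simp only [Finset.mem_range] at hi
      simp only [hudef]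
      rw [if_neg (by omega)]
    rw [Finset.sum_congr rfl h3] at h2
    simp only [Finset.sum_const_zero, zero_add] at h2
    rw [h2]
    apply tsum_congr
    intro i
    simp only [hudef]
    rw [if_pos (by omega)]
    have e : i + j + 1 = i + k := by omega
    have e2 : ((i + j : ℕ):ℝ) + 1 = (i:ℝ) + k := by push_cast [hkdef]; ring
    rw [e, e2]
  have hU' : (k:ℝ)^(q-1) * tailMass f k ≤ U := by
    rw [hUeq, htailk, ← tsum_mul_left]
    apply Summable.tsum_le_tsum _ (hgk.mul_left _) huk
    intro i
    have hik : (0:ℝ) < (i:ℝ) + k := by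
      have h1 : (1:ℝ) ≤ (k:ℝ) := by exact_mod_cast hk
      have h2 : (0:ℝ) ≤ (i:ℝ) := Nat.cast_nonneg i
      linarith
    have hkik : (k:ℝ) ≤ (i:ℝ) + k := by
      have h2 : (0:ℝ) ≤ (i:ℝ) := Nat.cast_nonneg i
      linarith
    have hk0 : (0:ℝ) ≤ (k:ℝ) := Nat.cast_nonneg k
    have hsplitpow : ((i:ℝ) + k)^q = ((i:ℝ) + k)^(q-1) * ((i:ℝ) + k) := by
      have : ((i:ℝ) + k)^(q - 1 + 1) = ((i:ℝ) + k)^(q-1) * ((i:ℝ) + k) :=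
        Real.rpow_add_one hik.ne' (q-1)
      rwa [sub_add_cancel] at this
    rw [hsplitpow]
    have hpow_le : (k:ℝ)^(q-1) ≤ ((i:ℝ) + k)^(q-1) :=
      Real.rpow_le_rpow hk0 hkik hq1
    have := mul_le_mul_of_nonneg_right hpow_le
      (mul_nonneg hik.le (hf (i + k)) : (0:ℝ) ≤ ((i:ℝ) + k) * f (i + k))
    calc (k:ℝ)^(q-1) * (((i:ℝ) + k) * f (i + k))
        ≤ ((i:ℝ) + k)^(q-1) * (((i:ℝ) + k) * f (i + k)) := this
      _ = ((i:ℝ) + k)^(q-1) * ((i:ℝ) + k) * f (i + k) := by ring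
  -- finish
  rw [← hV]
  have hfinal : U * V ≤ (1/2) * ∑' m, ∑' n, T m n := by linarith
  calc (k:ℝ)^(q-1) * tailMass f k * V ≤ U * V :=
        mul_le_mul_of_nonneg_right hU' hV0
    _ ≤ (1/2) * ∑' m, ∑' n, T m n := hfinal
end

section
/- Let q > 1, let p ≥ 2 be real, let ℓ ≥ 1 be an integer, and set β = (q−1)/(p−1). Let f : ℕ → [0,∞) satisfy ∑_{n≥1} n·f_n = 1, ∑_{n≥1} n^{p+q−1}·f_n < ∞, and G_ℓ := ∑_{n≥ℓ} n·f_n > 0. Then (1/2)·∑_{m≥1} ∑_{n≥1} (m^q + n^q)·f_m·f_n·[ (m+n)^p·1[m+n ≥ ℓ+1] − m^p·1[m ≥ ℓ+1] − n^p·1[n ≥ ℓ+1] ] ≥ p·G_ℓ^{−β}·( ∑_{n≥ℓ} n^p·f_n )^{1+β}·(1 − G_ℓ). -/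
/-- `Δ^p_K(m,n) = (m+n)^p·1[m+n ≥ K] − m^p·1[m ≥ K] − n^p·1[n ≥ K]`, the change of
the test function `ψ(j) = j^p·1[j ≥ K]` when clusters of sizes `m` and `n` merge. -/
noncomputable def deltaPow (p : ℝ) (K m n : ℕ) : ℝ :=
  (if K ≤ m + n then ((m : ℝ) + (n : ℝ)) ^ p else 0)
    - (if K ≤ m then (m : ℝ) ^ p else 0) - (if K ≤ n then (n : ℝ) ^ p else 0)

open Real

open Real

lemma add_rpow_ge {p a b : ℝ} (ha : 0 ≤ a) (hb : 0 ≤ b) (hp : 1 ≤ p) :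
    a ^ p + b ^ p ≤ (a + b) ^ p := by
  lift a to NNReal using ha
  lift b to NNReal using hb
  exact_mod_cast NNReal.add_rpow_le_rpow_add a b hp

lemma rpow_mvt_lower {p a b : ℝ} (ha : 1 ≤ a) (hb : 0 ≤ b) (hp : 1 ≤ p) :
    a ^ p + p * a ^ (p - 1) * b ≤ (a + b) ^ p := by
  have ha0 : 0 < a := lt_of_lt_of_le one_pos ha
  have hba : (0:ℝ) ≤ b / a := by positivity
  have h1 : (1 : ℝ) + p * (b / a) ≤ (1 + b / a) ^ p :=
    one_add_mul_self_le_rpow_one_add (by linarith) hp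
  have h2 : (a + b) ^ p = a ^ p * (1 + b / a) ^ p := by
    rw [← Real.mul_rpow (le_of_lt ha0) (by positivity)]
    congr 1
    field_simp
  rw [h2]
  calc a ^ p + p * a ^ (p - 1) * b = a ^ p * (1 + p * (b / a)) := by
        rw [Real.rpow_sub ha0, Real.rpow_one]
        field_simp
    _ ≤ a ^ p * (1 + b / a) ^ p := by
        apply mul_le_mul_of_nonneg_left h1 (Real.rpow_nonneg (le_of_lt ha0) p)

lemma rpow_mvt_upper {p a b : ℝ} (ha : 0 ≤ a) (hb : 0 ≤ b) (hp : 1 ≤ p) :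
    (a + b) ^ p - a ^ p ≤ p * (a + b) ^ (p - 1) * b := by
  rcases eq_or_lt_of_le (by positivity : (0:ℝ) ≤ a + b) with h | hab
  · have ha' : a = 0 := by nlinarith
    have hb' : b = 0 := by nlinarith
    simp [ha', hb', Real.zero_rpow (by positivity : p ≠ 0)]
  · set x := a + b with hx
    have ht : a / x ≤ 1 := by
      rw [div_le_one hab]; linarith
    have h1 : (1 : ℝ) + p * (a / x - 1) ≤ (a / x) ^ p := by
      have := one_add_mul_self_le_rpow_one_add (s := a / x - 1) (by
        have : 0 ≤ a / x := by positivity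
        linarith) hp
      simpa using this
    have h2 : a ^ p = x ^ p * (a / x) ^ p := by
      rw [← Real.mul_rpow (le_of_lt hab) (by positivity)]
      congr 1
      field_simp
    have h3 : x ^ p * (1 + p * (a / x - 1)) ≤ a ^ p := by
      rw [h2]
      exact mul_le_mul_of_nonneg_left h1 (Real.rpow_nonneg (le_of_lt hab) p)
    have h4 : x ^ p * (1 + p * (a / x - 1)) = x ^ p - p * x ^ (p - 1) * b := by
      rw [Real.rpow_sub hab, Real.rpow_one]
      field_simp
      ring
    linarith [h3, h4.symm.le]

lemma deltaPow_comm (p : ℝ) (K m n : ℕ) : deltaPow p K m n = deltaPow p K n m := by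
  unfold deltaPow
  rw [Nat.add_comm n m, add_comm (n:ℝ) (m:ℝ)]
  ring

lemma deltaPow_nonneg {p : ℝ} (hp : 1 ≤ p) (K m n : ℕ) : 0 ≤ deltaPow p K m n := by
  unfold deltaPow
  have hm0 : (0:ℝ) ≤ m := Nat.cast_nonneg m
  have hn0 : (0:ℝ) ≤ n := Nat.cast_nonneg n
  have hmono : ∀ x y : ℝ, 0 ≤ x → x ≤ y → x ^ p ≤ y ^ p := fun x y hx hxy =>
    Real.rpow_le_rpow hx hxy (by linarith)
  by_cases h1 : K ≤ m <;> by_cases h2 : K ≤ n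
  · rw [if_pos h1, if_pos h2, if_pos (le_trans h1 (Nat.le_add_right m n))]
    have := add_rpow_ge hm0 hn0 hp
    push_cast
    linarith
  · rw [if_pos h1, if_neg h2, if_pos (le_trans h1 (Nat.le_add_right m n))]
    have := hmono (m:ℝ) ((m:ℝ)+(n:ℝ)) hm0 (by linarith)
    linarith
  · rw [if_neg h1, if_pos h2, if_pos (le_trans h2 (Nat.le_add_left n m))]
    have := hmono (n:ℝ) ((m:ℝ)+(n:ℝ)) hn0 (by linarith)
    linarith
  · rw [if_neg h1, if_neg h2]
    by_cases h3 : K ≤ m + n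
    · rw [if_pos h3]
      have : (0:ℝ) ≤ ((m:ℝ)+(n:ℝ)) ^ p := Real.rpow_nonneg (by linarith) p
      linarith
    · simp [if_neg h3]

lemma deltaPow_lower {p : ℝ} (hp : 2 ≤ p) {K a b : ℕ} (ha : K ≤ a) (hb1 : 1 ≤ b)
    (hb : b < K) : p * (a:ℝ) ^ (p - 1) * b ≤ deltaPow p K a b := by
  unfold deltaPow
  rw [if_pos (le_trans ha (Nat.le_add_right a b)), if_pos ha, if_neg (not_le.mpr hb)]
  have ha1 : (1:ℝ) ≤ a := by
    have : 1 ≤ a := le_trans (le_trans hb1 (le_of_lt hb)) ha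
    exact_mod_cast this
  have := rpow_mvt_lower (a := (a:ℝ)) (b := (b:ℝ)) ha1 (Nat.cast_nonneg b) (by linarith)
  linarith

-- upper bound under a ≤ b
lemma deltaPow_upper_aux {p : ℝ} (hp : 2 ≤ p) {K a b : ℕ} (hK : 1 ≤ K) (ha1 : 1 ≤ a)
    (hab : a ≤ b) :
    deltaPow p K a b ≤ (p * 2 ^ (p-1) + (2*K:ℝ) ^ p) * ((a:ℝ) ^ (p-1) * (b:ℝ) ^ (p-1)) := by
  have ha1' : (1:ℝ) ≤ a := by exact_mod_cast ha1
  have hb1' : (1:ℝ) ≤ b := le_trans ha1' (by exact_mod_cast hab)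
  have hap : (1:ℝ) ≤ (a:ℝ) ^ (p-1) := Real.one_le_rpow ha1' (by linarith)
  have hbp : (1:ℝ) ≤ (b:ℝ) ^ (p-1) := Real.one_le_rpow hb1' (by linarith)
  have habp : (0:ℝ) ≤ (a:ℝ) ^ (p-1) * (b:ℝ) ^ (p-1) := by positivity
  have hKp : (0:ℝ) ≤ (2*K:ℝ) ^ p := Real.rpow_nonneg (by positivity) p
  have h2p : (0:ℝ) ≤ p * 2 ^ (p-1) := by positivity
  by_cases h2 : K ≤ b
  · -- deltaPow ≤ (a+b)^p - b^p ≤ p (a+b)^{p-1} a ≤ p 2^{p-1} b^{p-1} a^{p-1}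
    have key : deltaPow p K a b ≤ ((a:ℝ)+(b:ℝ)) ^ p - (b:ℝ) ^ p := by
      unfold deltaPow
      rw [if_pos (le_trans h2 (Nat.le_add_left b a)), if_pos h2]
      have : (0:ℝ) ≤ (if K ≤ a then (a:ℝ) ^ p else 0) := by
        split <;> [exact Real.rpow_nonneg (by linarith) p; rfl]
      linarith
    have mvt : ((b:ℝ)+(a:ℝ)) ^ p - (b:ℝ) ^ p ≤ p * ((b:ℝ)+(a:ℝ)) ^ (p-1) * a :=
      rpow_mvt_upper (by linarith) (by linarith) (by linarith)
    have hsum2b : (b:ℝ)+(a:ℝ) ≤ 2 * b := by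
      have : (a:ℝ) ≤ b := by exact_mod_cast hab
      linarith
    have h3 : ((b:ℝ)+(a:ℝ)) ^ (p-1) ≤ (2*(b:ℝ)) ^ (p-1) :=
      Real.rpow_le_rpow (by linarith) hsum2b (by linarith)
    have h4 : (2*(b:ℝ)) ^ (p-1) = 2 ^ (p-1) * (b:ℝ) ^ (p-1) :=
      Real.mul_rpow (by norm_num) (by linarith)
    have h5 : (a:ℝ) ≤ (a:ℝ) ^ (p-1) := by
      calc (a:ℝ) = (a:ℝ) ^ (1:ℝ) := (Real.rpow_one _).symm
        _ ≤ (a:ℝ) ^ (p-1) := Real.rpow_le_rpow_of_exponent_le ha1' (by linarith)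
    have hbpn : (0:ℝ) ≤ (b:ℝ) ^ (p-1) := by linarith
    have : p * ((b:ℝ)+(a:ℝ)) ^ (p-1) * a ≤ p * 2 ^ (p-1) * ((a:ℝ) ^ (p-1) * (b:ℝ) ^ (p-1)) := by
      have hpn : (0:ℝ) ≤ p := by linarith
      calc p * ((b:ℝ)+(a:ℝ)) ^ (p-1) * a ≤ p * (2 ^ (p-1) * (b:ℝ) ^ (p-1)) * a := by
            rw [← h4]
            apply mul_le_mul_of_nonneg_right (mul_le_mul_of_nonneg_left h3 hpn) (by positivity)
        _ ≤ p * (2 ^ (p-1) * (b:ℝ) ^ (p-1)) * (a:ℝ) ^ (p-1) := by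
            apply mul_le_mul_of_nonneg_left h5 (by positivity)
        _ = p * 2 ^ (p-1) * ((a:ℝ) ^ (p-1) * (b:ℝ) ^ (p-1)) := by ring
    calc deltaPow p K a b ≤ ((a:ℝ)+(b:ℝ)) ^ p - (b:ℝ) ^ p := key
      _ = ((b:ℝ)+(a:ℝ)) ^ p - (b:ℝ) ^ p := by ring_nf
      _ ≤ p * 2 ^ (p-1) * ((a:ℝ) ^ (p-1) * (b:ℝ) ^ (p-1)) := by linarith
      _ ≤ (p * 2 ^ (p-1) + (2*K:ℝ) ^ p) * ((a:ℝ) ^ (p-1) * (b:ℝ) ^ (p-1)) := by nlinarith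
  · -- both below K
    have h1 : ¬ K ≤ a := fun h => h2 (le_trans h hab)
    have key : deltaPow p K a b ≤ (if K ≤ a + b then ((a:ℝ)+(b:ℝ)) ^ p else 0) := by
      unfold deltaPow
      rw [if_neg h1, if_neg h2]
      ring_nf
      simp
    have h6 : (if K ≤ a + b then ((a:ℝ)+(b:ℝ)) ^ p else 0) ≤ (2*K:ℝ) ^ p := by
      split
      · apply Real.rpow_le_rpow (by positivity) _ (by linarith)
        have h7 : (a:ℝ) < K := by exact_mod_cast lt_of_le_of_lt (Nat.le_of_lt_succ (by omega)) (by omega : a < K)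
        have h8 : (b:ℝ) < K := by exact_mod_cast (not_le.mp h2)
        linarith
      · exact hKp
    calc deltaPow p K a b ≤ (2*K:ℝ) ^ p := le_trans key h6
      _ = (2*K:ℝ) ^ p * 1 := by ring
      _ ≤ (2*K:ℝ) ^ p * ((a:ℝ) ^ (p-1) * (b:ℝ) ^ (p-1)) := by
          apply mul_le_mul_of_nonneg_left _ hKp
          nlinarith
      _ ≤ (p * 2 ^ (p-1) + (2*K:ℝ) ^ p) * ((a:ℝ) ^ (p-1) * (b:ℝ) ^ (p-1)) := by nlinarith

lemma deltaPow_upper {p : ℝ} (hp : 2 ≤ p) {K a b : ℕ} (hK : 1 ≤ K) (ha1 : 1 ≤ a)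
    (hb1 : 1 ≤ b) :
    deltaPow p K a b ≤ (p * 2 ^ (p-1) + (2*K:ℝ) ^ p) * ((a:ℝ) ^ (p-1) * (b:ℝ) ^ (p-1)) := by
  rcases le_total a b with h | h
  · exact deltaPow_upper_aux hp hK ha1 h
  · rw [deltaPow_comm, mul_comm ((a:ℝ)^(p-1))]
    exact deltaPow_upper_aux hp hK hb1 h

lemma deltaPow_lower' {p : ℝ} (hp : 2 ≤ p) {K a b : ℕ} (ha1 : 1 ≤ a) (hb1 : 1 ≤ b)
    (hab : K ≤ a + b) (hbK : b < K) : p * (a:ℝ) ^ (p-1) * b ≤ deltaPow p K a b := by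
  unfold deltaPow
  rw [if_pos hab, if_neg (not_le.mpr hbK)]
  have ha1' : (1:ℝ) ≤ a := by exact_mod_cast ha1
  have h := rpow_mvt_lower (a := (a:ℝ)) (b := (b:ℝ)) ha1' (Nat.cast_nonneg b) (by linarith)
  have hif : (if K ≤ a then (a:ℝ) ^ p else 0) ≤ (a:ℝ) ^ p := by
    split
    · exact le_rfl
    · exact Real.rpow_nonneg (Nat.cast_nonneg a) p
  linarith

set_option maxHeartbeats 2000000 in
/-- If `q > 1`, `p ≥ 2`, `β = (q−1)/(p−1)`, and `f : ℕ → [0,∞)` has unit mass,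
finite `(p+q−1)`-moment and positive tail mass `G_ℓ = ∑_{n≥ℓ} n f_n`, then the
coagulation flux for the kernel `m^q + n^q` and test function `j^p·1[j ≥ ℓ+1]` is at
least `p · G_ℓ^{−β} · (∑_{n≥ℓ} n^p f_n)^{1+β} · (1 − G_ℓ)`. -/
theorem moment_flux_lower_bound
    (q p : ℝ) (hq : 1 < q) (hp : 2 ≤ p) (ℓ : ℕ) (hℓ : 1 ≤ ℓ)
    (f : ℕ → ℝ) (hf : ∀ n : ℕ, 0 ≤ f n)
    (hmass : ∑' n : ℕ, ((n : ℝ) + 1) * f (n + 1) = 1)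
    (hmoment : Summable (fun n : ℕ => ((n : ℝ) + 1) ^ (p + q - 1) * f (n + 1)))
    (hG : 0 < ∑' n : ℕ, ((n : ℝ) + (ℓ : ℝ)) * f (n + ℓ)) :
    p * (∑' n : ℕ, ((n : ℝ) + (ℓ : ℝ)) * f (n + ℓ)) ^ (-((q - 1) / (p - 1)))
        * (∑' n : ℕ, ((n : ℝ) + (ℓ : ℝ)) ^ p * f (n + ℓ)) ^ (1 + (q - 1) / (p - 1))
        * (1 - ∑' n : ℕ, ((n : ℝ) + (ℓ : ℝ)) * f (n + ℓ))
      ≤ (1 / 2) * ∑' (m : ℕ) (n : ℕ),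
          (((m : ℝ) + 1) ^ q + ((n : ℝ) + 1) ^ q) * f (m + 1) * f (n + 1)
            * deltaPow p (ℓ + 1) (m + 1) (n + 1) := by

  have hp1 : (1:ℝ) ≤ p := by linarith
  have hq0 : (0:ℝ) < q := by linarith
  have hone : ∀ n : ℕ, (1:ℝ) ≤ (n:ℝ) + 1 := fun n => by
    have := Nat.cast_nonneg (α := ℝ) n; linarith
  -- summability of all moments up to p + q - 1
  have hmom : ∀ r : ℝ, 0 ≤ r → r ≤ p + q - 1 →
      Summable (fun n : ℕ => ((n : ℝ) + 1) ^ r * f (n + 1)) := by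
    intro r hr0 hr
    apply Summable.of_nonneg_of_le _ _ hmoment
    · intro n; exact mul_nonneg (Real.rpow_nonneg (by positivity) r) (hf (n+1))
    · intro n
      exact mul_le_mul_of_nonneg_right
        (Real.rpow_le_rpow_of_exponent_le (hone n) hr) (hf (n+1))
  have hs_mass : Summable (fun n : ℕ => ((n : ℝ) + 1) * f (n + 1)) :=
    (hmom 1 one_pos.le (by linarith)).congr (fun n => by rw [Real.rpow_one])
  obtain ⟨l, rfl⟩ : ∃ l, ℓ = l + 1 := ⟨ℓ - 1, (Nat.succ_pred_eq_of_pos hℓ).symm⟩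
  have hidx : ∀ n : ℕ, n + (l + 1) = n + l + 1 := fun n => rfl
  have hcst : ∀ n : ℕ, ((n + l : ℕ) : ℝ) + 1 = (n:ℝ) + ((l+1 : ℕ) : ℝ) := fun n => by
    push_cast; ring
  have hxpos : ∀ n : ℕ, (0:ℝ) < (n:ℝ) + ((l+1 : ℕ) : ℝ) := fun n => by
    push_cast; positivity
  -- tail summability
  have htail : ∀ r : ℝ, 0 ≤ r → r ≤ p + q - 1 →
      Summable (fun n : ℕ => ((n:ℝ) + ((l+1 : ℕ) : ℝ)) ^ r * f (n + (l+1))) := by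
    intro r hr0 hr
    refine ((summable_nat_add_iff l).mpr (hmom r hr0 hr)).congr (fun n => ?_)
    rw [hcst n, hidx n]
  have hs_tail_pq : Summable (fun n : ℕ =>
      ((n:ℝ) + ((l+1 : ℕ) : ℝ)) ^ (p+q-1) * f (n + (l+1))) := htail _ (by linarith) le_rfl
  have hs_tail_p : Summable (fun n : ℕ =>
      ((n:ℝ) + ((l+1 : ℕ) : ℝ)) ^ p * f (n + (l+1))) := htail p (by linarith) (by linarith)
  have hs_tail_1 : Summable (fun n : ℕ =>
      ((n:ℝ) + ((l+1 : ℕ) : ℝ)) * f (n + (l+1))) :=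
    (htail 1 one_pos.le (by linarith)).congr (fun n => by rw [Real.rpow_one])
  set G := ∑' n : ℕ, ((n : ℝ) + ((l+1 : ℕ) : ℝ)) * f (n + (l+1)) with hGdef
  set Mp := ∑' n : ℕ, ((n : ℝ) + ((l+1 : ℕ) : ℝ)) ^ p * f (n + (l+1)) with hMpdef
  set Tpq := ∑' n : ℕ, ((n : ℝ) + ((l+1 : ℕ) : ℝ)) ^ (p+q-1) * f (n + (l+1)) with hTdef
  set S := ∑' (m : ℕ) (n : ℕ),
      (((m : ℝ) + 1) ^ q + ((n : ℝ) + 1) ^ q) * f (m + 1) * f (n + 1)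
        * deltaPow p (l + 1 + 1) (m + 1) (n + 1) with hSdef
  set K : ℕ := l + 1 + 1 with hKdef
  -- mass splitting : 1 - G is the head sum
  have hsplit : (∑ i ∈ Finset.range l, ((i:ℝ)+1) * f (i+1)) + G = 1 := by
    rw [hGdef]
    conv_rhs => rw [← hmass]
    rw [← Summable.sum_add_tsum_nat_add l hs_mass]
    congr 1
    exact (tsum_congr (fun n => by rw [hcst n, hidx n])).symm
  have hS1 : 1 - G = ∑ i ∈ Finset.range l, ((i:ℝ)+1) * f (i+1) := by linarith
  have hS1nonneg : 0 ≤ 1 - G := by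
    rw [hS1]
    exact Finset.sum_nonneg (fun i _ => mul_nonneg (by positivity) (hf (i+1)))
  -- Hölder step
  have hp1' : (0:ℝ) < p - 1 := by linarith
  have hq1' : (0:ℝ) < q - 1 := by linarith
  have hpq2 : (0:ℝ) < p + q - 2 := by linarith
  have hp1ne : p - 1 ≠ 0 := ne_of_gt hp1'
  have hq1ne : q - 1 ≠ 0 := ne_of_gt hq1'
  have hpq2ne : p + q - 2 ≠ 0 := ne_of_gt hpq2
  set P := (p + q - 2) / (p - 1) with hPdef
  set Q := (p + q - 2) / (q - 1) with hQdef
  have hP1 : 1 < P := by rw [hPdef, lt_div_iff₀ hp1']; linarith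
  have hPpos : (0:ℝ) < P := by linarith
  have hQpos : (0:ℝ) < Q := by rw [hQdef]; exact div_pos hpq2 hq1'
  have hPne : P ≠ 0 := ne_of_gt hPpos
  have hQne : Q ≠ 0 := ne_of_gt hQpos
  have hconj : P.HolderConjugate Q := by
    refine ⟨?_, hPpos, hQpos⟩
    · rw [inv_one, hPdef, hQdef]
      field_simp
      ring
  have hcollapse : ∀ (A R : ℝ), 0 ≤ A → R ≠ 0 → (A ^ (1/R)) ^ R = A := by
    intro A R hA hR
    rw [← Real.rpow_mul hA, one_div_mul_cancel hR, Real.rpow_one]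
  have hFnn : ∀ n : ℕ, 0 ≤ ((n:ℝ) + ((l+1 : ℕ) : ℝ)) ^ (p+q-1) * f (n + (l+1)) :=
    fun n => mul_nonneg (Real.rpow_nonneg (hxpos n).le _) (hf _)
  have hGnn : ∀ n : ℕ, 0 ≤ ((n:ℝ) + ((l+1 : ℕ) : ℝ)) * f (n + (l+1)) :=
    fun n => mul_nonneg (hxpos n).le (hf _)
  have hT0 : 0 ≤ Tpq := tsum_nonneg hFnn
  have hMp0 : 0 ≤ Mp := tsum_nonneg (fun n => mul_nonneg (Real.rpow_nonneg (hxpos n).le _) (hf _))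
  have hholder : Mp ≤ Tpq ^ (1/P) * G ^ (1/Q) := by
    have hold := Real.inner_le_Lp_mul_Lq_tsum_of_nonneg
      (f := fun n : ℕ => (((n:ℝ) + ((l+1 : ℕ) : ℝ)) ^ (p+q-1) * f (n + (l+1))) ^ (1/P))
      (g := fun n : ℕ => (((n:ℝ) + ((l+1 : ℕ) : ℝ)) * f (n + (l+1))) ^ (1/Q))
      hconj
      (fun n => Real.rpow_nonneg (hFnn n) _)
      (fun n => Real.rpow_nonneg (hGnn n) _)
      (hs_tail_pq.congr (fun n => (hcollapse _ P (hFnn n) hPne).symm))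
      (hs_tail_1.congr (fun n => (hcollapse _ Q (hGnn n) hQne).symm))
    have hexp : (p+q-1) * (1/P) + 1/Q = p := by
      rw [hPdef, hQdef]; field_simp; ring
    have hone' : 1/P + 1/Q = (1:ℝ) := by
      have h := hconj.inv_add_inv_eq_one
      rw [one_div, one_div]; exact h
    have h1 : (∑' n : ℕ, ((((n:ℝ) + ((l+1 : ℕ) : ℝ)) ^ (p+q-1) * f (n + (l+1))) ^ (1/P))
        * ((((n:ℝ) + ((l+1 : ℕ) : ℝ)) * f (n + (l+1))) ^ (1/Q))) = Mp := by
      rw [hMpdef]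
      refine tsum_congr (fun n => ?_)
      have hx := hxpos n
      have hfn := hf (n + (l+1))
      calc (((n:ℝ) + ((l+1 : ℕ) : ℝ)) ^ (p+q-1) * f (n + (l+1))) ^ (1/P)
            * ((((n:ℝ) + ((l+1 : ℕ) : ℝ)) * f (n + (l+1))) ^ (1/Q))
          = (((n:ℝ) + ((l+1 : ℕ) : ℝ)) ^ ((p+q-1) * (1/P)) * f (n + (l+1)) ^ (1/P))
            * (((n:ℝ) + ((l+1 : ℕ) : ℝ)) ^ (1/Q) * f (n + (l+1)) ^ (1/Q)) := by
            rw [Real.mul_rpow (Real.rpow_nonneg hx.le _) hfn, Real.mul_rpow hx.le hfn,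
              ← Real.rpow_mul hx.le]
        _ = (((n:ℝ) + ((l+1 : ℕ) : ℝ)) ^ ((p+q-1) * (1/P)) * ((n:ℝ) + ((l+1 : ℕ) : ℝ)) ^ (1/Q))
            * (f (n + (l+1)) ^ (1/P) * f (n + (l+1)) ^ (1/Q)) := by ring
        _ = ((n:ℝ) + ((l+1 : ℕ) : ℝ)) ^ p * f (n + (l+1)) := by
            rw [← Real.rpow_add hx, ← Real.rpow_add' hfn (by rw [hone']; norm_num), hexp,
              hone', Real.rpow_one]
    have h2 : (∑' n : ℕ, ((((n:ℝ) + ((l+1 : ℕ) : ℝ)) ^ (p+q-1) * f (n + (l+1))) ^ (1/P)) ^ P)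
        = Tpq := by
      rw [hTdef]; exact tsum_congr (fun n => hcollapse _ P (hFnn n) hPne)
    have h3 : (∑' n : ℕ, ((((n:ℝ) + ((l+1 : ℕ) : ℝ)) * f (n + (l+1))) ^ (1/Q)) ^ Q) = G := by
      rw [hGdef]; exact tsum_congr (fun n => hcollapse _ Q (hGnn n) hQne)
    have := hold
    rw [h1, h2, h3] at this
    exact this
  have hstep : G ^ (-((q-1)/(p-1))) * Mp ^ (1 + (q-1)/(p-1)) ≤ Tpq := by
    have hβP : 1 + (q-1)/(p-1) = P := by rw [hPdef]; field_simp; ring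
    have h1 : Mp ^ P ≤ (Tpq ^ (1/P) * G ^ (1/Q)) ^ P :=
      Real.rpow_le_rpow hMp0 hholder hPpos.le
    have h2 : (Tpq ^ (1/P) * G ^ (1/Q)) ^ P = Tpq * G ^ ((q-1)/(p-1)) := by
      rw [Real.mul_rpow (Real.rpow_nonneg hT0 _) (Real.rpow_nonneg hG.le _),
        ← Real.rpow_mul hT0, ← Real.rpow_mul hG.le, one_div_mul_cancel hPne, Real.rpow_one]
      congr 1
      rw [hPdef, hQdef]; field_simp
    have h3 : Mp ^ P ≤ Tpq * G ^ ((q-1)/(p-1)) := h2 ▸ h1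
    have h4 : G ^ (-((q-1)/(p-1))) * G ^ ((q-1)/(p-1)) = 1 := by
      rw [← Real.rpow_add hG]; norm_num
    calc G ^ (-((q-1)/(p-1))) * Mp ^ (1 + (q-1)/(p-1))
        = G ^ (-((q-1)/(p-1))) * Mp ^ P := by rw [hβP]
      _ ≤ G ^ (-((q-1)/(p-1))) * (Tpq * G ^ ((q-1)/(p-1))) :=
          mul_le_mul_of_nonneg_left h3 (Real.rpow_nonneg hG.le _)
      _ = (G ^ (-((q-1)/(p-1))) * G ^ ((q-1)/(p-1))) * Tpq := by ring
      _ = Tpq := by rw [h4, one_mul]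
  -- the double sum lower bound
  have hK1 : 1 ≤ K := by omega
  have h2p0 : (0:ℝ) ≤ 2 ^ (p-1) := Real.rpow_nonneg (by norm_num) _
  have hKp0 : (0:ℝ) ≤ (2 * (K:ℝ)) ^ p := Real.rpow_nonneg (by positivity) _
  set C : ℝ := p * 2 ^ (p-1) + (2 * (K:ℝ)) ^ p with hCdef
  have hC0 : 0 ≤ C := by rw [hCdef]; nlinarith
  have hu0 : ∀ m : ℕ, (0:ℝ) ≤ ((m:ℝ)+1) ^ (p+q-1) * f (m+1) :=
    fun m => mul_nonneg (Real.rpow_nonneg (by positivity) _) (hf _)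
  have hΔnn : ∀ m n : ℕ, 0 ≤ deltaPow p K (m+1) (n+1) :=
    fun m n => deltaPow_nonneg hp1 K (m+1) (n+1)
  have hg0 : ∀ m n : ℕ, 0 ≤ (((m:ℝ)+1)^q + ((n:ℝ)+1)^q) * f (m+1) * f (n+1)
      * deltaPow p K (m+1) (n+1) := by
    intro m n
    have h1 : (0:ℝ) ≤ ((m:ℝ)+1)^q + ((n:ℝ)+1)^q := by positivity
    exact mul_nonneg (mul_nonneg (mul_nonneg h1 (hf _)) (hf _)) (hΔnn m n)
  have hcastm : ∀ m : ℕ, ((m+1 : ℕ) : ℝ) = (m:ℝ) + 1 := fun m => by push_cast; ring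
  have hsplitq : ∀ m : ℕ, ((m:ℝ)+1)^q * ((m:ℝ)+1)^(p-1) = ((m:ℝ)+1)^(p+q-1) := by
    intro m
    rw [← Real.rpow_add (by linarith [hone m] : (0:ℝ) < (m:ℝ)+1)]
    congr 1; ring
  have hgle : ∀ m n : ℕ, (((m:ℝ)+1)^q + ((n:ℝ)+1)^q) * f (m+1) * f (n+1)
      * deltaPow p K (m+1) (n+1)
      ≤ (2 * C * (((m:ℝ)+1) ^ (p+q-1) * f (m+1))) * (((n:ℝ)+1) ^ (p+q-1) * f (n+1)) := by
    intro m n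
    have ha1 := hone m
    have hb1 := hone n
    have hd := deltaPow_upper hp (K := K) (a := m+1) (b := n+1) hK1 (by omega) (by omega)
    rw [hcastm m, hcastm n] at hd
    have hker : ((m:ℝ)+1)^q + ((n:ℝ)+1)^q ≤ 2 * (((m:ℝ)+1)^q * ((n:ℝ)+1)^q) := by
      have h1 : (1:ℝ) ≤ ((m:ℝ)+1)^q := Real.one_le_rpow ha1 hq0.le
      have h2 : (1:ℝ) ≤ ((n:ℝ)+1)^q := Real.one_le_rpow hb1 hq0.le
      nlinarith
    have hk0 : (0:ℝ) ≤ ((m:ℝ)+1)^q + ((n:ℝ)+1)^q := by positivity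
    have h1 : (((m:ℝ)+1)^q + ((n:ℝ)+1)^q) * f (m+1) * f (n+1)
        ≤ (2 * (((m:ℝ)+1)^q * ((n:ℝ)+1)^q)) * f (m+1) * f (n+1) :=
      mul_le_mul_of_nonneg_right (mul_le_mul_of_nonneg_right hker (hf _)) (hf _)
    have h2 : (((m:ℝ)+1)^q + ((n:ℝ)+1)^q) * f (m+1) * f (n+1) * deltaPow p K (m+1) (n+1)
        ≤ (2 * (((m:ℝ)+1)^q * ((n:ℝ)+1)^q)) * f (m+1) * f (n+1)
            * deltaPow p K (m+1) (n+1) :=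
      mul_le_mul_of_nonneg_right h1 (hΔnn m n)
    have h30 : (0:ℝ) ≤ (2 * (((m:ℝ)+1)^q * ((n:ℝ)+1)^q)) * f (m+1) * f (n+1) := by
      have : (0:ℝ) ≤ 2 * (((m:ℝ)+1)^q * ((n:ℝ)+1)^q) := by positivity
      exact mul_nonneg (mul_nonneg this (hf _)) (hf _)
    have h3 : (2 * (((m:ℝ)+1)^q * ((n:ℝ)+1)^q)) * f (m+1) * f (n+1)
          * deltaPow p K (m+1) (n+1)
        ≤ (2 * (((m:ℝ)+1)^q * ((n:ℝ)+1)^q)) * f (m+1) * f (n+1)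
          * (C * (((m:ℝ)+1)^(p-1) * ((n:ℝ)+1)^(p-1))) :=
      mul_le_mul_of_nonneg_left hd h30
    have h4 : (2 * (((m:ℝ)+1)^q * ((n:ℝ)+1)^q)) * f (m+1) * f (n+1)
          * (C * (((m:ℝ)+1)^(p-1) * ((n:ℝ)+1)^(p-1)))
        = (2 * C * (((m:ℝ)+1) ^ (p+q-1) * f (m+1))) * (((n:ℝ)+1) ^ (p+q-1) * f (n+1)) := by
      rw [← hsplitq m, ← hsplitq n]; ring
    linarith
  have hsn : ∀ m : ℕ, Summable (fun n : ℕ => (((m:ℝ)+1)^q + ((n:ℝ)+1)^q) * f (m+1) * f (n+1)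
      * deltaPow p K (m+1) (n+1)) := by
    intro m
    exact Summable.of_nonneg_of_le (hg0 m) (hgle m) (hmoment.mul_left _)
  set U := ∑' n : ℕ, ((n:ℝ)+1) ^ (p+q-1) * f (n+1) with hUdef
  have hSmle : ∀ m : ℕ, (∑' n : ℕ, (((m:ℝ)+1)^q + ((n:ℝ)+1)^q) * f (m+1) * f (n+1)
      * deltaPow p K (m+1) (n+1)) ≤ (2 * C * U) * (((m:ℝ)+1) ^ (p+q-1) * f (m+1)) := by
    intro m
    have h1 := Summable.tsum_le_tsum (hgle m) (hsn m) (hmoment.mul_left _)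
    rw [tsum_mul_left] at h1
    calc (∑' n : ℕ, (((m:ℝ)+1)^q + ((n:ℝ)+1)^q) * f (m+1) * f (n+1)
          * deltaPow p K (m+1) (n+1))
        ≤ (2 * C * (((m:ℝ)+1) ^ (p+q-1) * f (m+1))) * U := h1
      _ = (2 * C * U) * (((m:ℝ)+1) ^ (p+q-1) * f (m+1)) := by ring
  have hsouter : Summable (fun m : ℕ => ∑' n : ℕ, (((m:ℝ)+1)^q + ((n:ℝ)+1)^q)
      * f (m+1) * f (n+1) * deltaPow p K (m+1) (n+1)) :=
    Summable.of_nonneg_of_le (fun m => tsum_nonneg (fun n => hg0 m n)) hSmle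
      (hmoment.mul_left _)
  -- the comparison functions
  set cc : ℕ → ℝ := fun m => if l ≤ m then p * ((m:ℝ)+1) ^ (p+q-1) * f (m+1) else 0 with hccdef
  set dd : ℕ → ℝ := fun n => if n < l then ((n:ℝ)+1) * f (n+1) else 0 with hdddef
  have hcc_pos : ∀ m, l ≤ m → cc m = p * ((m:ℝ)+1) ^ (p+q-1) * f (m+1) := fun m h => by
    simp only [hccdef, if_pos h]
  have hcc_neg : ∀ m, m < l → cc m = 0 := fun m h => by
    simp only [hccdef, if_neg (Nat.not_le.mpr h)]
  have hdd_pos : ∀ n, n < l → dd n = ((n:ℝ)+1) * f (n+1) := fun n h => by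
    simp only [hdddef, if_pos h]
  have hdd_zero : ∀ n, l ≤ n → dd n = 0 := fun n h => by
    simp only [hdddef, if_neg (Nat.not_lt.mpr h)]
  have hcc0 : ∀ m, 0 ≤ cc m := by
    intro m
    rcases Nat.lt_or_ge m l with h | h
    · rw [hcc_neg m h]
    · rw [hcc_pos m h]
      exact mul_nonneg (mul_nonneg (by linarith) (Real.rpow_nonneg (by positivity) _)) (hf _)
  have hdd0 : ∀ n, 0 ≤ dd n := by
    intro n
    rcases Nat.lt_or_ge n l with h | h
    · rw [hdd_pos n h]; exact mul_nonneg (by positivity) (hf _)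
    · rw [hdd_zero n h]
  have hcsum : Summable cc := by
    apply Summable.of_nonneg_of_le hcc0 _ (hmoment.mul_left p)
    intro m
    rcases Nat.lt_or_ge m l with h | h
    · rw [hcc_neg m h]
      exact mul_nonneg (by linarith) (hu0 m)
    · rw [hcc_pos m h, ← mul_assoc]
  have hdsum : Summable dd := by
    apply Summable.of_nonneg_of_le hdd0 _ hs_mass
    intro n
    rcases Nat.lt_or_ge n l with h | h
    · rw [hdd_pos n h]
    · rw [hdd_zero n h]
      exact mul_nonneg (by positivity) (hf _)
  -- pointwise lower bound
  have hlow : ∀ m n : ℕ, cc m * dd n + dd m * cc n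
      ≤ (((m:ℝ)+1)^q + ((n:ℝ)+1)^q) * f (m+1) * f (n+1) * deltaPow p K (m+1) (n+1) := by
    intro m n
    by_cases hm : l ≤ m <;> by_cases hn : l ≤ n
    · rw [hdd_zero n hn, hdd_zero m hm]
      simp only [mul_zero, zero_mul, add_zero]
      exact hg0 m n
    · have hnl : n < l := Nat.not_le.mp hn
      have hdl : p * ((m+1:ℕ):ℝ) ^ (p-1) * ((n+1:ℕ):ℝ) ≤ deltaPow p K (m+1) (n+1) :=
        deltaPow_lower' hp (by omega) (by omega) (by omega) (by omega)
      rw [hcastm m, hcastm n] at hdl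
      have hAq0 : (0:ℝ) ≤ ((m:ℝ)+1)^q := Real.rpow_nonneg (by positivity) q
      have hBq0 : (0:ℝ) ≤ ((n:ℝ)+1)^q := Real.rpow_nonneg (by positivity) q
      calc cc m * dd n + dd m * cc n
          = (((m:ℝ)+1)^q * (p * ((m:ℝ)+1) ^ (p-1) * ((n:ℝ)+1))) * (f (m+1) * f (n+1)) := by
            rw [hdd_zero m hm, hcc_neg n hnl, hcc_pos m hm, hdd_pos n hnl, ← hsplitq m]
            ring
        _ ≤ (((m:ℝ)+1)^q * deltaPow p K (m+1) (n+1)) * (f (m+1) * f (n+1)) :=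
            mul_le_mul_of_nonneg_right (mul_le_mul_of_nonneg_left hdl hAq0)
              (mul_nonneg (hf _) (hf _))
        _ ≤ ((((m:ℝ)+1)^q + ((n:ℝ)+1)^q) * deltaPow p K (m+1) (n+1)) * (f (m+1) * f (n+1)) :=
            mul_le_mul_of_nonneg_right
              (mul_le_mul_of_nonneg_right (by linarith) (hΔnn m n))
              (mul_nonneg (hf _) (hf _))
        _ = (((m:ℝ)+1)^q + ((n:ℝ)+1)^q) * f (m+1) * f (n+1) * deltaPow p K (m+1) (n+1) := by
            ring
    · have hml : m < l := Nat.not_le.mp hm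
      have hdl : p * ((n+1:ℕ):ℝ) ^ (p-1) * ((m+1:ℕ):ℝ) ≤ deltaPow p K (n+1) (m+1) :=
        deltaPow_lower' hp (by omega) (by omega) (by omega) (by omega)
      rw [hcastm m, hcastm n, deltaPow_comm p K (n+1) (m+1)] at hdl
      have hAq0 : (0:ℝ) ≤ ((m:ℝ)+1)^q := Real.rpow_nonneg (by positivity) q
      have hBq0 : (0:ℝ) ≤ ((n:ℝ)+1)^q := Real.rpow_nonneg (by positivity) q
      calc cc m * dd n + dd m * cc n
          = (((n:ℝ)+1)^q * (p * ((n:ℝ)+1) ^ (p-1) * ((m:ℝ)+1))) * (f (m+1) * f (n+1)) := by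
            rw [hdd_zero n hn, hcc_neg m hml, hcc_pos n hn, hdd_pos m hml, ← hsplitq n]
            ring
        _ ≤ (((n:ℝ)+1)^q * deltaPow p K (m+1) (n+1)) * (f (m+1) * f (n+1)) :=
            mul_le_mul_of_nonneg_right (mul_le_mul_of_nonneg_left hdl hBq0)
              (mul_nonneg (hf _) (hf _))
        _ ≤ ((((m:ℝ)+1)^q + ((n:ℝ)+1)^q) * deltaPow p K (m+1) (n+1)) * (f (m+1) * f (n+1)) :=
            mul_le_mul_of_nonneg_right
              (mul_le_mul_of_nonneg_right (by linarith) (hΔnn m n))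
              (mul_nonneg (hf _) (hf _))
        _ = (((m:ℝ)+1)^q + ((n:ℝ)+1)^q) * f (m+1) * f (n+1) * deltaPow p K (m+1) (n+1) := by
            ring
    · have hml : m < l := Nat.not_le.mp hm
      have hnl : n < l := Nat.not_le.mp hn
      rw [hcc_neg m hml, hcc_neg n hnl]
      simp only [mul_zero, zero_mul, zero_add]
      exact hg0 m n
  -- sum the lower bound
  have hTc : ∑' m : ℕ, cc m = p * Tpq := by
    rw [← Summable.sum_add_tsum_nat_add l hcsum,
      Finset.sum_eq_zero (fun i hi => hcc_neg i (Finset.mem_range.mp hi)), zero_add]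
    calc ∑' n : ℕ, cc (n + l)
        = ∑' n : ℕ, p * (((n:ℝ) + ((l+1 : ℕ) : ℝ)) ^ (p+q-1) * f (n + (l+1))) := by
          refine tsum_congr (fun n => ?_)
          rw [hcc_pos (n+l) (Nat.le_add_left l n), hcst n, hidx n, mul_assoc]
      _ = p * Tpq := by rw [tsum_mul_left, hTdef]
  have hTd : ∑' n : ℕ, dd n = 1 - G := by
    rw [hS1]
    calc ∑' n : ℕ, dd n = ∑ i ∈ Finset.range l, dd i :=
          tsum_eq_sum (fun i hi => hdd_zero i (Nat.le_of_not_lt (fun h => hi (Finset.mem_range.mpr h))))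
      _ = ∑ i ∈ Finset.range l, ((i:ℝ)+1) * f (i+1) :=
          Finset.sum_congr rfl (fun i hi => hdd_pos i (Finset.mem_range.mp hi))
  have hinnerle : ∀ m : ℕ, cc m * (1-G) + dd m * (p * Tpq)
      ≤ ∑' n : ℕ, (((m:ℝ)+1)^q + ((n:ℝ)+1)^q) * f (m+1) * f (n+1)
        * deltaPow p K (m+1) (n+1) := by
    intro m
    have h1 : ∑' n : ℕ, (cc m * dd n + dd m * cc n) = cc m * (1-G) + dd m * (p * Tpq) := by
      rw [Summable.tsum_add (hdsum.mul_left (cc m)) (hcsum.mul_left (dd m)), tsum_mul_left,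
        tsum_mul_left, hTc, hTd]
    rw [← h1]
    exact Summable.tsum_le_tsum (hlow m) ((hdsum.mul_left _).add (hcsum.mul_left _)) (hsn m)
  have houter : (p * Tpq) * (1-G) + (1-G) * (p * Tpq) ≤ S := by
    have h2 := Summable.tsum_le_tsum hinnerle ((hcsum.mul_right _).add (hdsum.mul_right _)) hsouter
    rw [Summable.tsum_add (hcsum.mul_right _) (hdsum.mul_right _), tsum_mul_right, tsum_mul_right,
      hTc, hTd] at h2
    exact h2
  have hfinal : p * Tpq * (1-G) ≤ (1/2) * S := by linarith
  calc p * G ^ (-((q-1)/(p-1))) * Mp ^ (1 + (q-1)/(p-1)) * (1 - G)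
      = p * (G ^ (-((q-1)/(p-1))) * Mp ^ (1 + (q-1)/(p-1))) * (1 - G) := by ring
    _ ≤ p * Tpq * (1 - G) :=
        mul_le_mul_of_nonneg_right (mul_le_mul_of_nonneg_left hstep (by linarith)) hS1nonneg
    _ ≤ (1/2) * S := hfinal
end

section
/- Let a > 0 be real, let k be a natural number, let ε ≥ 0, and let L : ℕ → ℕ be a finitely supported function with total mass N = ∑_{n≥1} n·L_n ≥ 1. If (1/N)·∑_{m=2^k}^{2^{k+1}−1} m·L_m ≥ ε, then (1/(2N²))·∑_{m≥1} ∑_{n≥1} (mn)^a·L_m·(L_n − 1[m=n])·Δ_{2^{k+1}}(m,n) ≥ 2^{k(2a−1)}·2^{−max(1−a,0)}·ε² − 2^{2a(k+1)}/N. -/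
/-- Total mass `N = ∑_{n ≥ 1} n · L_n` of a particle configuration `L`. -/
noncomputable def totalMass (L : ℕ → ℕ) : ℝ :=
  ∑' n : ℕ, (n : ℝ) * (L n : ℝ)

lemma deltaMass_nonneg_s7 (K m n : ℕ) : 0 ≤ deltaMass K m n := by
  unfold deltaMass
  have h0m : (0:ℝ) ≤ m := Nat.cast_nonneg m
  have h0n : (0:ℝ) ≤ n := Nat.cast_nonneg n
  rcases le_or_gt K m with hm | hm <;> rcases le_or_gt K n with hn | hn
  · rw [if_pos (le_trans hm (Nat.le_add_right m n)), if_pos hm, if_pos hn]; linarith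
  · rw [if_pos (le_trans hm (Nat.le_add_right m n)), if_pos hm, if_neg (not_le.2 hn)]; linarith
  · rw [if_pos (le_trans hn (Nat.le_add_left n m)), if_neg (not_le.2 hm), if_pos hn]; linarith
  · rw [if_neg (not_le.2 hm), if_neg (not_le.2 hn)]
    split_ifs with h
    · linarith
    · linarith

lemma key_ineq (a : ℝ) (ha : 0 < a) (k : ℕ) (P Q : ℝ)
    (hP1 : (2:ℝ)^(k:ℝ) ≤ P) (hP2 : P ≤ 2^((k:ℝ)+1))
    (hQ1 : (2:ℝ)^(k:ℝ) ≤ Q) (hQ2 : Q ≤ 2^((k:ℝ)+1)) :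
    2 * ((2:ℝ)^((k:ℝ)*(2*a-1)) * (2:ℝ)^(-(max (1-a) 0))) * (P*Q) ≤ (P*Q)^a * (P+Q) := by
  have h2 : (0:ℝ) ≤ 2 := by norm_num
  have hP0 : 0 < P := lt_of_lt_of_le (Real.rpow_pos_of_pos two_pos _) hP1
  have hQ0 : 0 < Q := lt_of_lt_of_le (Real.rpow_pos_of_pos two_pos _) hQ1
  have hPa : (2:ℝ)^((k:ℝ)*a) ≤ P^a := by
    rw [Real.rpow_mul h2]
    exact Real.rpow_le_rpow (Real.rpow_nonneg h2 _) hP1 ha.le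
  have hQa : (2:ℝ)^((k:ℝ)*a) ≤ Q^a := by
    rw [Real.rpow_mul h2]
    exact Real.rpow_le_rpow (Real.rpow_nonneg h2 _) hQ1 ha.le
  have hlow : ∀ X : ℝ, 0 < X → (2:ℝ)^(k:ℝ) ≤ X → X ≤ 2^((k:ℝ)+1) →
      (2:ℝ)^((k:ℝ)*(a-1)) * (2:ℝ)^(-(max (1-a) 0)) ≤ X^(a-1) := by
    intro X hX0 hX1 hX2
    rcases le_total 1 a with h | h
    · rw [max_eq_right (by linarith : 1 - a ≤ 0), neg_zero, Real.rpow_zero, mul_one,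
        Real.rpow_mul h2]
      exact Real.rpow_le_rpow (Real.rpow_nonneg h2 _) hX1 (by linarith)
    · rw [max_eq_left (by linarith : (0:ℝ) ≤ 1 - a)]
      have e : (2:ℝ)^((k:ℝ)*(a-1)) * (2:ℝ)^(-(1-a)) = ((2:ℝ)^((k:ℝ)+1))^(a-1) := by
        rw [← Real.rpow_mul h2, ← Real.rpow_add two_pos]
        ring_nf
      rw [e]
      exact Real.rpow_le_rpow_of_nonpos hX0 hX2 (by linarith)
  have hPlow := hlow P hP0 hP1 hP2
  have hQlow := hlow Q hQ0 hQ1 hQ2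
  have hD : (2:ℝ)^((k:ℝ)*a) * ((2:ℝ)^((k:ℝ)*(a-1)) * (2:ℝ)^(-(max (1-a) 0)))
      = (2:ℝ)^((k:ℝ)*(2*a-1)) * (2:ℝ)^(-(max (1-a) 0)) := by
    rw [← mul_assoc, ← Real.rpow_add two_pos]
    ring_nf
  have hPs : P^a = P^(a-1) * P := by
    rw [← Real.rpow_add_one hP0.ne' (a-1)]; ring_nf
  have hQs : Q^a = Q^(a-1) * Q := by
    rw [← Real.rpow_add_one hQ0.ne' (a-1)]; ring_nf
  have hmul : (P*Q)^a = P^a * Q^a := Real.mul_rpow hP0.le hQ0.le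
  set D := (2:ℝ)^((k:ℝ)*(2*a-1)) * (2:ℝ)^(-(max (1-a) 0)) with hDdef
  have hD0 : 0 ≤ D := by positivity
  have t1 : D * (P * Q) ≤ (P^a * Q^(a-1)) * (P * Q) := by
    apply mul_le_mul_of_nonneg_right _ (by positivity)
    calc D = (2:ℝ)^((k:ℝ)*a) * ((2:ℝ)^((k:ℝ)*(a-1)) * (2:ℝ)^(-(max (1-a) 0))) := hD.symm
    _ ≤ P^a * Q^(a-1) := by
        apply mul_le_mul hPa hQlow (by positivity) (by positivity)
  have t2 : D * (P * Q) ≤ (P^(a-1) * Q^a) * (P * Q) := by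
    apply mul_le_mul_of_nonneg_right _ (by positivity)
    calc D = (2:ℝ)^((k:ℝ)*a) * ((2:ℝ)^((k:ℝ)*(a-1)) * (2:ℝ)^(-(max (1-a) 0))) := hD.symm
    _ ≤ Q^a * P^(a-1) := by
        apply mul_le_mul hQa hPlow (by positivity) (by positivity)
    _ = P^(a-1) * Q^a := by ring
  have expand : (P*Q)^a * (P+Q) = (P^(a-1) * Q^a) * (P*Q) + (P^a * Q^(a-1)) * (P*Q) := by
    rw [hmul, hPs, hQs]; ring
  rw [expand]
  linarith

/-- The integrand of the generator double sum. -/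
noncomputable def fterm (a : ℝ) (k : ℕ) (L : ℕ → ℕ) (m n : ℕ) : ℝ :=
  (((m : ℝ) + 1) * ((n : ℝ) + 1)) ^ a * (L (m + 1) : ℝ)
    * ((L (n + 1) : ℝ) - if m = n then 1 else 0)
    * deltaMass (2 ^ (k + 1)) (m + 1) (n + 1)

lemma fterm_nonneg (a : ℝ) (k : ℕ) (L : ℕ → ℕ) (m n : ℕ) : 0 ≤ fterm a k L m n := by
  unfold fterm
  have hd := deltaMass_nonneg_s7 (2 ^ (k + 1)) (m + 1) (n + 1)
  have hp : (0:ℝ) ≤ (((m : ℝ) + 1) * ((n : ℝ) + 1)) ^ a :=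
    Real.rpow_nonneg (by positivity) a
  rcases eq_or_ne m n with rfl | hmn
  · rw [if_pos rfl]
    have hLL : (0:ℝ) ≤ (L (m+1) : ℝ) * ((L (m+1) : ℝ) - 1) := by
      rcases Nat.eq_zero_or_pos (L (m+1)) with h | h
      · simp [h]
      · have h1 : (1:ℝ) ≤ (L (m+1) : ℝ) := by exact_mod_cast h
        nlinarith
    have := mul_nonneg (mul_nonneg hp hLL) hd
    nlinarith [this]
  · rw [if_neg hmn, sub_zero]
    have : (0:ℝ) ≤ (L (n+1) : ℝ) := Nat.cast_nonneg _
    positivity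

/-- Generator lower bound for the kernel `(mn)^a`: if the dyadic block
`2^k ≤ m ≤ 2^{k+1}−1` carries a fraction at least `ε` of the mass, then the action
of the Marcus–Lushnikov generator on the tail mass above `2^{k+1}` is at least
`2^{k(2a−1)} 2^{−(1−a)⁺} ε² − 2^{2a(k+1)}/N`. -/
theorem generator_dyadic_tail_lower_bound
    (a : ℝ) (ha : 0 < a) (k : ℕ) (ε : ℝ) (hε : 0 ≤ ε)
    (L : ℕ → ℕ) (hLfin : (Function.support L).Finite)
    (hN : 1 ≤ totalMass L)
    (hblock : ε ≤ (totalMass L)⁻¹ *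
      ∑ m ∈ Finset.Ico (2 ^ k : ℕ) (2 ^ (k + 1) : ℕ), (m : ℝ) * (L m : ℝ)) :
    (2 : ℝ) ^ ((k : ℝ) * (2 * a - 1)) * (2 : ℝ) ^ (-(max (1 - a) 0)) * ε ^ 2
        - (2 : ℝ) ^ (2 * a * ((k : ℝ) + 1)) / totalMass L
      ≤ (1 / (2 * totalMass L ^ 2)) *
          ∑' (m : ℕ) (n : ℕ),
            (((m : ℝ) + 1) * ((n : ℝ) + 1)) ^ a * (L (m + 1) : ℝ)
              * ((L (n + 1) : ℝ) - if m = n then 1 else 0)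
              * deltaMass (2 ^ (k + 1)) (m + 1) (n + 1) := by
  classical
  have hN0 : 0 < totalMass L := lt_of_lt_of_le one_pos hN
  set N := totalMass L with hNdef
  set c0 := (2:ℝ) ^ ((k : ℝ) * (2 * a - 1)) * (2:ℝ) ^ (-(max (1 - a) 0)) with hc0def
  set E := (2:ℝ) ^ (2 * a * ((k : ℝ) + 1)) with hEdef
  set M := ∑ m ∈ Finset.Ico (2 ^ k : ℕ) (2 ^ (k + 1) : ℕ), (m : ℝ) * (L m : ℝ) with hMdef
  have hc0 : 0 ≤ c0 := by rw [hc0def]; positivity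
  have hE0 : 0 ≤ E := by rw [hEdef]; positivity
  have hNt : N = ∑' n : ℕ, (n : ℝ) * (L n : ℝ) := rfl
  -- support finsets
  have hF : ∀ n, L n ≠ 0 → n ∈ hLfin.toFinset := fun n hn => hLfin.mem_toFinset.2 hn
  set F' := hLfin.toFinset.image (fun x => x - 1) with hF'def
  have hF' : ∀ m, m ∉ F' → L (m + 1) = 0 := by
    intro m hm
    by_contra h
    exact hm (Finset.mem_image.2 ⟨m + 1, hF _ h, rfl⟩)
  -- summability
  have hsummN : Summable (fun n : ℕ => (n : ℝ) * (L n : ℝ)) := by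
    apply summable_of_ne_finset_zero (s := hLfin.toFinset)
    intro n hn
    have : L n = 0 := by by_contra h; exact hn (hF n h)
    simp [this]
  have hsum_inner : ∀ m, Summable (fun n => fterm a k L m n) := by
    intro m
    apply summable_of_ne_finset_zero (s := insert m F')
    intro n hn
    have h1 : L (n + 1) = 0 := hF' n (fun h => hn (Finset.mem_insert_of_mem h))
    have h2 : m ≠ n := by rintro rfl; exact hn (Finset.mem_insert_self _ _)
    unfold fterm
    rw [if_neg h2, h1]
    simp
  have houter0 : ∀ m, m ∉ F' → (∑' n, fterm a k L m n) = 0 := by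
    intro m hm
    have h1 : L (m + 1) = 0 := hF' m hm
    have hz : ∀ n, fterm a k L m n = 0 := by intro n; unfold fterm; rw [h1]; simp
    simp [hz]
  have hsum_outer : Summable (fun m => ∑' n, fterm a k L m n) :=
    summable_of_ne_finset_zero (s := F') houter0
  -- the dyadic block, shifted by one
  set blk := Finset.Ico (2 ^ k - 1) (2 ^ (k + 1) - 1) with hblkdef
  have hmem : ∀ m ∈ blk, 2 ^ k ≤ m + 1 ∧ m + 1 < 2 ^ (k + 1) := by
    intro m hm; rw [hblkdef, Finset.mem_Ico] at hm; omega
  have hbound : ∀ m ∈ blk, (2:ℝ) ^ (k:ℝ) ≤ (m:ℝ) + 1 ∧ (m:ℝ) + 1 ≤ (2:ℝ) ^ ((k:ℝ) + 1) := by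
    intro m hm
    obtain ⟨h1, h2⟩ := hmem m hm
    have e1 : (2:ℝ) ^ (k:ℝ) = ((2 ^ k : ℕ) : ℝ) := by
      rw [Real.rpow_natCast]; push_cast; ring
    have e2 : (2:ℝ) ^ ((k:ℝ) + 1) = ((2 ^ (k + 1) : ℕ) : ℝ) := by
      rw [show ((k:ℝ) + 1) = ((k + 1 : ℕ) : ℝ) by push_cast; ring, Real.rpow_natCast]
      push_cast; ring
    constructor
    · rw [e1]; exact_mod_cast h1
    · rw [e2]; exact_mod_cast h2.le
  have hdelta : ∀ m ∈ blk, ∀ n ∈ blk,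
      deltaMass (2 ^ (k + 1)) (m + 1) (n + 1) = ((m:ℝ) + 1) + ((n:ℝ) + 1) := by
    intro m hm n hn
    obtain ⟨hm1, hm2⟩ := hmem m hm
    obtain ⟨hn1, hn2⟩ := hmem n hn
    unfold deltaMass
    rw [if_pos (by omega), if_neg (by omega), if_neg (by omega)]
    push_cast; ring
  -- pointwise lower bound on the block
  have hpt : ∀ m ∈ blk, ∀ n ∈ blk,
      2 * c0 * ((((m:ℝ) + 1) * (L (m + 1) : ℝ)) * (((n:ℝ) + 1) * (L (n + 1) : ℝ)))
        - (if m = n then 1 else 0) * (2 * E * (((m:ℝ) + 1) * (L (m + 1) : ℝ)))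
      ≤ fterm a k L m n := by
    intro m hm n hn
    obtain ⟨hPm1, hPm2⟩ := hbound m hm
    obtain ⟨hQn1, hQn2⟩ := hbound n hn
    have hl0 : (0:ℝ) ≤ (L (m + 1) : ℝ) := Nat.cast_nonneg _
    have hl0' : (0:ℝ) ≤ (L (n + 1) : ℝ) := Nat.cast_nonneg _
    have key := key_ineq a ha k ((m:ℝ) + 1) ((n:ℝ) + 1) hPm1 hPm2 hQn1 hQn2
    rw [← hc0def] at key
    have hdel := hdelta m hm n hn
    unfold fterm
    rw [hdel]
    rcases eq_or_ne m n with rfl | hmn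
    · rw [if_pos rfl]
      have hEb : (((m:ℝ) + 1) * ((m:ℝ) + 1)) ^ a ≤ E := by
        calc (((m:ℝ) + 1) * ((m:ℝ) + 1)) ^ a
            ≤ ((2:ℝ) ^ ((k:ℝ) + 1) * (2:ℝ) ^ ((k:ℝ) + 1)) ^ a :=
              Real.rpow_le_rpow (by positivity)
                (mul_le_mul hPm2 hPm2 (by positivity) (by positivity)) ha.le
          _ = E := by
              rw [← Real.rpow_add two_pos, ← Real.rpow_mul (by norm_num : (0:ℝ) ≤ 2), hEdef]
              congr 1; ring
      nlinarith [mul_le_mul_of_nonneg_right key (mul_nonneg hl0 hl0),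
        mul_le_mul_of_nonneg_right hEb
          (by positivity : (0:ℝ) ≤ 2 * (((m:ℝ) + 1)) * (L (m + 1) : ℝ)),
        hl0, hPm1]
    · rw [if_neg hmn]
      simp only [zero_mul, sub_zero]
      have h := mul_le_mul_of_nonneg_right key (mul_nonneg hl0 hl0')
      calc 2 * c0 * ((((m:ℝ) + 1) * (L (m + 1) : ℝ)) * (((n:ℝ) + 1) * (L (n + 1) : ℝ)))
          = (2 * c0 * (((m:ℝ) + 1) * ((n:ℝ) + 1))) * ((L (m + 1) : ℝ) * (L (n + 1) : ℝ)) := by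
            ring
        _ ≤ ((((m:ℝ) + 1) * ((n:ℝ) + 1)) ^ a * (((m:ℝ) + 1) + ((n:ℝ) + 1)))
            * ((L (m + 1) : ℝ) * (L (n + 1) : ℝ)) := h
        _ = (((m:ℝ) + 1) * ((n:ℝ) + 1)) ^ a * (L (m + 1) : ℝ) * (L (n + 1) : ℝ)
            * (((m:ℝ) + 1) + ((n:ℝ) + 1)) := by ring
  -- identify the block mass
  have hM' : ∑ m ∈ blk, (((m:ℝ) + 1) * (L (m + 1) : ℝ)) = M := by
    rw [hMdef, hblkdef, Finset.sum_Ico_eq_sum_range, Finset.sum_Ico_eq_sum_range]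
    rw [show 2 ^ (k + 1) - 1 - (2 ^ k - 1) = 2 ^ (k + 1) - 2 ^ k from by omega]
    apply Finset.sum_congr rfl
    intro i _
    have hone : 1 ≤ 2 ^ k := Nat.one_le_pow _ _ (by norm_num)
    have e : 2 ^ k + i = 2 ^ k - 1 + i + 1 := by omega
    rw [e]
    push_cast
    ring
  have hM0 : 0 ≤ M := by
    rw [hMdef]; apply Finset.sum_nonneg; intro i _; positivity
  have hMN : M ≤ N := by
    rw [hMdef, hNt]
    exact Summable.sum_le_tsum _ (fun i _ => by positivity) hsummN
  have hMε : ε * N ≤ M := by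
    have h := mul_le_mul_of_nonneg_right hblock hN0.le
    rwa [show N⁻¹ * M * N = M * (N⁻¹ * N) from by ring, inv_mul_cancel₀ hN0.ne', mul_one] at h
  -- the double block sum
  have hdouble : 2 * c0 * M * M - 2 * E * M ≤ ∑ m ∈ blk, ∑ n ∈ blk, fterm a k L m n := by
    have inner : ∀ m ∈ blk,
        ∑ n ∈ blk, (2 * c0 * ((((m:ℝ) + 1) * (L (m + 1) : ℝ)) * (((n:ℝ) + 1) * (L (n + 1) : ℝ)))
          - (if m = n then 1 else 0) * (2 * E * (((m:ℝ) + 1) * (L (m + 1) : ℝ))))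
        = 2 * c0 * (((m:ℝ) + 1) * (L (m + 1) : ℝ)) * M
          - 2 * E * (((m:ℝ) + 1) * (L (m + 1) : ℝ)) := by
      intro m hm
      rw [Finset.sum_sub_distrib]
      have e1 : ∑ n ∈ blk,
          2 * c0 * ((((m:ℝ) + 1) * (L (m + 1) : ℝ)) * (((n:ℝ) + 1) * (L (n + 1) : ℝ)))
          = 2 * c0 * (((m:ℝ) + 1) * (L (m + 1) : ℝ)) * M := by
        rw [← hM', Finset.mul_sum]
        apply Finset.sum_congr rfl
        intros; ring
      have e2 : ∑ n ∈ blk, (if m = n then 1 else 0) * (2 * E * (((m:ℝ) + 1) * (L (m + 1) : ℝ)))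
          = 2 * E * (((m:ℝ) + 1) * (L (m + 1) : ℝ)) := by
        simp only [ite_mul, one_mul, zero_mul]
        rw [Finset.sum_ite_eq blk m (fun _ => 2 * E * (((m:ℝ) + 1) * (L (m + 1) : ℝ))),
          if_pos hm]
      rw [e1, e2]
    calc 2 * c0 * M * M - 2 * E * M
        = ∑ m ∈ blk, (2 * c0 * (((m:ℝ) + 1) * (L (m + 1) : ℝ)) * M
            - 2 * E * (((m:ℝ) + 1) * (L (m + 1) : ℝ))) := by
          rw [Finset.sum_sub_distrib]
          have e3 : ∑ m ∈ blk, 2 * c0 * (((m:ℝ) + 1) * (L (m + 1) : ℝ)) * M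
              = 2 * c0 * M * M := by
            calc ∑ m ∈ blk, 2 * c0 * (((m:ℝ) + 1) * (L (m + 1) : ℝ)) * M
                = ∑ m ∈ blk, (2 * c0 * M) * (((m:ℝ) + 1) * (L (m + 1) : ℝ)) := by
                  apply Finset.sum_congr rfl; intros; ring
              _ = (2 * c0 * M) * ∑ m ∈ blk, (((m:ℝ) + 1) * (L (m + 1) : ℝ)) :=
                  (Finset.mul_sum _ _ _).symm
              _ = 2 * c0 * M * M := by rw [hM']
          have e4 : ∑ m ∈ blk, 2 * E * (((m:ℝ) + 1) * (L (m + 1) : ℝ)) = 2 * E * M := by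
            rw [← hM', Finset.mul_sum]
          rw [e3, e4]
      _ = ∑ m ∈ blk, ∑ n ∈ blk,
            (2 * c0 * ((((m:ℝ) + 1) * (L (m + 1) : ℝ)) * (((n:ℝ) + 1) * (L (n + 1) : ℝ)))
              - (if m = n then 1 else 0) * (2 * E * (((m:ℝ) + 1) * (L (m + 1) : ℝ)))) :=
          (Finset.sum_congr rfl inner).symm
      _ ≤ ∑ m ∈ blk, ∑ n ∈ blk, fterm a k L m n :=
          Finset.sum_le_sum (fun m hm => Finset.sum_le_sum (fun n hn => hpt m hm n hn))
  -- compare with the full tsum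
  have hts : ∑ m ∈ blk, ∑ n ∈ blk, fterm a k L m n ≤ ∑' m, ∑' n, fterm a k L m n := by
    calc ∑ m ∈ blk, ∑ n ∈ blk, fterm a k L m n
        ≤ ∑ m ∈ blk, ∑' n, fterm a k L m n :=
          Finset.sum_le_sum
            (fun m _ => Summable.sum_le_tsum blk (fun n _ => fterm_nonneg a k L m n) (hsum_inner m))
      _ ≤ ∑' m, ∑' n, fterm a k L m n :=
          Summable.sum_le_tsum blk (fun m _ => tsum_nonneg (fun n => fterm_nonneg a k L m n)) hsum_outer
  have hchain : 2 * c0 * ((ε * N) * (ε * N)) - 2 * E * N ≤ ∑' m, ∑' n, fterm a k L m n := by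
    have h1 : (ε * N) * (ε * N) ≤ M * M :=
      mul_self_le_mul_self (by positivity) hMε
    have hA : 2 * c0 * ((ε * N) * (ε * N)) ≤ 2 * c0 * (M * M) :=
      mul_le_mul_of_nonneg_left h1 (by linarith)
    have hB : 2 * E * M ≤ 2 * E * N :=
      mul_le_mul_of_nonneg_left hMN (by linarith)
    linarith [hdouble, hts]
  have hfinal : c0 * ε ^ 2 - E / N = (1 / (2 * N ^ 2)) * (2 * c0 * ((ε * N) * (ε * N)) - 2 * E * N) := by
    field_simp
  show c0 * ε ^ 2 - E / N ≤ (1 / (2 * N ^ 2)) * ∑' m, ∑' n, fterm a k L m n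
  rw [hfinal]
  exact mul_le_mul_of_nonneg_left hchain (by positivity)
end

section
/- Let q > 1 be real, let k ≥ 1 be an integer, and let L : ℕ → ℕ be a finitely supported function with total mass N = ∑_{n≥1} n·L_n ≥ 1 such that L_n = 0 for every n with 2n > N (no particle exceeds half the total mass). Then (1/(2N))·∑_{m≥1} ∑_{n≥1} (m^q·n + n^q·m)·L_m·(L_n − 1[m=n]) ≥ (1/4)·∑_{n≥k} n^q·L_n. -/
/-- Rate of decrease of the particle number: if `q > 1`, `k ≥ 1`, the configuration
`L` has total mass `N ≥ 1` and no particle exceeds half the total mass, then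
`(1/(2N)) ∑_{m,n ≥ 1} (m^q n + n^q m) L_m (L_n − 1[m=n]) ≥ (1/4) ∑_{n ≥ k} n^q L_n`. -/
theorem particle_number_decrease_lower_bound
    (q : ℝ) (hq : 1 < q) (k : ℕ) (hk : 1 ≤ k)
    (L : ℕ → ℕ) (hLfin : (Function.support L).Finite)
    (hN : 1 ≤ totalMass L)
    (hhalf : ∀ n : ℕ, totalMass L < 2 * (n : ℝ) → L n = 0) :
    (1 / 4) * ∑' n : ℕ, ((n : ℝ) + (k : ℝ)) ^ q * (L (n + k) : ℝ)
      ≤ (1 / (2 * totalMass L)) *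
          ∑' (m : ℕ) (n : ℕ),
            (((m : ℝ) + 1) ^ q * ((n : ℝ) + 1) + ((n : ℝ) + 1) ^ q * ((m : ℝ) + 1))
              * (L (m + 1) : ℝ)
              * ((L (n + 1) : ℝ) - if m = n then 1 else 0) := by
  classical
  set N := totalMass L with hNdef
  have hN0 : (0:ℝ) < N := lt_of_lt_of_le one_pos hN
  set M := hLfin.toFinset.sup id + 1 with hMdef
  have hM : ∀ n, M ≤ n → (L n : ℝ) = 0 := by
    intro n hn
    by_contra h
    have h1 : L n ≠ 0 := by exact_mod_cast h
    have h2 : n ∈ hLfin.toFinset := by simpa [Function.mem_support] using h1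
    have h3 : n ≤ hLfin.toFinset.sup id := Finset.le_sup (f := id) h2
    omega
  set g : ℕ → ℕ → ℝ := fun m n =>
    (((m : ℝ) + 1) ^ q * ((n : ℝ) + 1) + ((n : ℝ) + 1) ^ q * ((m : ℝ) + 1))
      * (L (m + 1) : ℝ) * ((L (n + 1) : ℝ) - if m = n then 1 else 0) with hg
  set A : ℝ := ∑ m ∈ Finset.range M, ((m:ℝ)+1)^q * (L (m+1) : ℝ) with hA
  have hA0 : 0 ≤ A := Finset.sum_nonneg fun m _ =>
    mul_nonneg (Real.rpow_nonneg (by positivity) q) (Nat.cast_nonneg _)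
  -- B = N
  have hB : ∑ m ∈ Finset.range M, ((m:ℝ)+1) * (L (m+1) : ℝ) = N := by
    have h1 : N = ∑ n ∈ Finset.range (M+1), (n:ℝ) * (L n : ℝ) := by
      rw [hNdef, totalMass]
      refine tsum_eq_sum (fun n hn => ?_)
      have hn' : M ≤ n := by simp only [Finset.mem_range] at hn; omega
      rw [hM n hn']; ring
    rw [h1, Finset.sum_range_succ' (fun n => (n:ℝ) * (L n : ℝ)) M]
    push_cast
    ring
  -- tsum reductions
  have hinner : ∀ m, ∑' n, g m n = ∑ n ∈ Finset.range M, g m n := by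
    intro m
    refine tsum_eq_sum (fun n hn => ?_)
    have hn' : M ≤ n + 1 := by simp only [Finset.mem_range] at hn; omega
    by_cases hmn : m = n
    · subst hmn
      simp [hg, hM (m+1) hn']
    · simp [hg, hmn, hM (n+1) hn']
  have houter : (∑' m, ∑' n, g m n) = ∑ m ∈ Finset.range M, ∑ n ∈ Finset.range M, g m n := by
    rw [tsum_congr hinner]
    refine tsum_eq_sum (fun m hm => Finset.sum_eq_zero fun n _ => ?_)
    have hm' : M ≤ m + 1 := by simp only [Finset.mem_range] at hm; omega
    simp [hg, hM (m+1) hm']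
  have hLHS : (∑' n : ℕ, ((n : ℝ) + (k : ℝ)) ^ q * (L (n + k) : ℝ))
      = ∑ n ∈ Finset.range M, ((n : ℝ) + (k : ℝ)) ^ q * (L (n + k) : ℝ) := by
    refine tsum_eq_sum (fun n hn => ?_)
    have hn' : M ≤ n + k := by simp only [Finset.mem_range] at hn; omega
    rw [hM (n+k) hn']; ring
  -- termwise expansion
  have hterm : ∀ m n : ℕ, g m n
      = ((m:ℝ)+1)^q * (L (m+1):ℝ) * (((n:ℝ)+1) * (L (n+1):ℝ))
        + ((m:ℝ)+1) * (L (m+1):ℝ) * (((n:ℝ)+1)^q * (L (n+1):ℝ))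
        - (if m = n then 2*((m:ℝ)+1)^q*((m:ℝ)+1)*(L (m+1):ℝ) else 0) := by
    intro m n
    by_cases hmn : m = n
    · subst hmn
      simp only [hg]
      split_ifs with h
      · ring
      · exact absurd trivial h
    · simp only [hg, if_neg hmn]; ring
  have key : ∀ m ∈ Finset.range M, ∑ n ∈ Finset.range M, g m n
      = ((m:ℝ)+1)^q * (L (m+1):ℝ) * N + ((m:ℝ)+1) * (L (m+1):ℝ) * A
        - 2*((m:ℝ)+1)^q*((m:ℝ)+1)*(L (m+1):ℝ) := by
    intro m hm
    rw [Finset.sum_congr rfl (fun n _ => hterm m n)]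
    rw [Finset.sum_sub_distrib, Finset.sum_add_distrib, ← Finset.mul_sum, ← Finset.mul_sum,
      Finset.sum_ite_eq, if_pos hm, hB, ← hA]
  have hS : ∑ m ∈ Finset.range M, ∑ n ∈ Finset.range M, g m n
      = A * N + N * A - ∑ m ∈ Finset.range M, 2*((m:ℝ)+1)^q*((m:ℝ)+1)*(L (m+1):ℝ) := by
    rw [Finset.sum_congr rfl key, Finset.sum_sub_distrib, Finset.sum_add_distrib,
      ← Finset.sum_mul, ← Finset.sum_mul, ← hA, ← hB]
  -- diagonal bound
  have hD : ∑ m ∈ Finset.range M, 2*((m:ℝ)+1)^q*((m:ℝ)+1)*(L (m+1):ℝ) ≤ N * A := by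
    rw [hA, Finset.mul_sum]
    refine Finset.sum_le_sum fun m _ => ?_
    by_cases h0 : L (m+1) = 0
    · simp [h0]
    · have h1 : ¬ (N < 2 * ((m+1 : ℕ) : ℝ)) := fun hc => h0 (hhalf (m+1) hc)
      push_neg at h1
      push_cast at h1
      have hLpos : (0:ℝ) ≤ (L (m+1):ℝ) := Nat.cast_nonneg _
      have hpow : (0:ℝ) ≤ ((m:ℝ)+1)^q := Real.rpow_nonneg (by positivity) q
      have h2 := mul_le_mul_of_nonneg_right h1 (mul_nonneg hpow hLpos)
      nlinarith [h2]
  have hSge : N * A ≤ ∑ m ∈ Finset.range M, ∑ n ∈ Finset.range M, g m n := by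
    rw [hS]; nlinarith
  -- tail bound : LHS' ≤ A
  have htail : ∑ n ∈ Finset.range M, ((n : ℝ) + (k : ℝ)) ^ q * (L (n + k) : ℝ) ≤ A := by
    set f : ℕ → ℝ := fun j => (j:ℝ)^q * (L j : ℝ) with hf
    have hf0 : ∀ j, 0 ≤ f j := fun j =>
      mul_nonneg (Real.rpow_nonneg (Nat.cast_nonneg _) q) (Nat.cast_nonneg _)
    have e1 : ∑ n ∈ Finset.range M, ((n : ℝ) + (k : ℝ)) ^ q * (L (n + k) : ℝ)
        = ∑ j ∈ Finset.Ico k (k + M), f j := by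
      rw [Finset.sum_Ico_eq_sum_range]
      simp only [Nat.add_sub_cancel_left]
      refine Finset.sum_congr rfl fun n _ => ?_
      simp only [hf]
      push_cast
      rw [add_comm (k:ℝ) (n:ℝ), add_comm k n]
    have e2 : A = ∑ j ∈ Finset.Ico 1 (1 + M), f j := by
      rw [Finset.sum_Ico_eq_sum_range]
      simp only [Nat.add_sub_cancel_left]
      rw [hA]
      refine Finset.sum_congr rfl fun m _ => ?_
      simp only [hf]
      push_cast
      rw [add_comm (1:ℝ) (m:ℝ), add_comm 1 m]
    have e3 : A = ∑ j ∈ Finset.Ico 1 (k + M), f j := by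
      rw [e2]
      refine Finset.sum_subset (Finset.Ico_subset_Ico le_rfl (by omega)) fun j hj hj' => ?_
      simp only [Finset.mem_Ico] at hj hj'
      have : M ≤ j := by omega
      simp [hf, hM j this]
    rw [e1, e3]
    refine Finset.sum_le_sum_of_subset_of_nonneg
      (Finset.Ico_subset_Ico hk le_rfl) fun j _ _ => hf0 j
  -- combine
  rw [hLHS, houter]
  have hpos : (0:ℝ) < 1 / (2 * N) := by positivity
  have h1 : (1/(2*N)) * (N*A) ≤ (1/(2*N)) * ∑ m ∈ Finset.range M, ∑ n ∈ Finset.range M, g m n :=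
    mul_le_mul_of_nonneg_left hSge (le_of_lt hpos)
  have h2 : (1/(2*N)) * (N*A) = A/2 := by field_simp
  rw [h2] at h1
  have h3 : (1/4) * (∑ n ∈ Finset.range M, ((n : ℝ) + (k : ℝ)) ^ q * (L (n + k) : ℝ)) ≤ A/2 := by
    nlinarith [Finset.sum_nonneg (fun n (_ : n ∈ Finset.range M) =>
      mul_nonneg (Real.rpow_nonneg (by positivity : (0:ℝ) ≤ (n:ℝ)+(k:ℝ)) q)
        (Nat.cast_nonneg (L (n+k))))]
  linarith
end
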